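/- arXiv:0809.1640 — 5 statements merged into one kernel-verified Lean document; each statement's English description precedes it below -/
import Mathlib

section
/- For every real ε with 0 < ε < 1 and every real A > 0 there exist a constant C > 0 and a threshold x₀ such that for all x ≥ x₀: the number of positive integers n ≤ x whose z-smooth part exceeds x^ε is at most C · x · (log x)^{-A}, where z := exp(log x / (ε log log x)). -/
open scoped Classical

/-- The `z`-smooth part of a positive integer `n`: the product of `p ^ v_p(n)` over the
primes `p ≤ z` dividing `n`, i.e. the largest `z`-smooth divisor of `n`. -/
noncomputable def smoothPart (z : ℝ) (n : ℕ) : ℕ :=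
  ∏ p ∈ n.primeFactors.filter fun p : ℕ => (p : ℝ) ≤ z, p ^ n.factorization p


/-- Chebyshev-type bound from the primorial. -/
lemma rankin_cheb (n : ℕ) : ∑ p ∈ n.primesBelow, Real.log p ≤ n * Real.log 4 := by
  have hsub : n.primesBelow ⊆ (Finset.range (n+1)).filter (fun p => p.Prime) := by
    intro p hp
    rw [Nat.mem_primesBelow] at hp
    exact Finset.mem_filter.mpr ⟨Finset.mem_range.mpr (by omega), hp.2⟩
  have h2 : (∏ p ∈ n.primesBelow, p) ≤ 4 ^ n := by
    calc ∏ p ∈ n.primesBelow, p ≤ ∏ p ∈ (Finset.range (n+1)).filter (fun p => p.Prime), p := by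
          refine Finset.prod_le_prod_of_subset_of_one_le' hsub ?_
          intro p hp _
          exact ((Finset.mem_filter.mp hp).2).one_lt.le
      _ = primorial n := rfl
      _ ≤ 4 ^ n := primorial_le_4_pow n
  have h1 : ∑ p ∈ n.primesBelow, Real.log p = Real.log (∏ p ∈ n.primesBelow, (p:ℝ)) := by
    rw [Real.log_prod]
    intro p hp
    exact_mod_cast (Nat.prime_of_mem_primesBelow hp).pos.ne'
  rw [h1, ← Nat.cast_prod]
  calc Real.log ((∏ p ∈ n.primesBelow, p : ℕ) : ℝ) ≤ Real.log ((4:ℝ)^n) := by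
        apply Real.log_le_log
        · have : 0 < ∏ p ∈ n.primesBelow, p :=
            Finset.prod_pos fun p hp => (Nat.prime_of_mem_primesBelow hp).pos
          exact_mod_cast this
        · exact_mod_cast h2
    _ = n * Real.log 4 := by rw [Real.log_pow]

/-- Harmonic sum bound. -/
lemma rankin_harm (K : ℕ) : ∑ k ∈ Finset.Icc 1 K, (1:ℝ)/k ≤ 1 + Real.log K := by
  induction K with
  | zero => simp
  | succ n ih =>
    rcases Nat.eq_zero_or_pos n with h | h
    · subst h; simp
    · rw [Finset.sum_Icc_succ_top (by omega)]
      have hn : (0:ℝ) < n := by exact_mod_cast h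
      have hlog : Real.log n + 1/((n:ℝ)+1) ≤ Real.log ((n:ℝ)+1) := by
        have h1 := Real.log_le_sub_one_of_pos (x := (n:ℝ)/((n:ℝ)+1)) (by positivity)
        rw [Real.log_div (by positivity) (by positivity)] at h1
        have : (n:ℝ)/((n:ℝ)+1) - 1 = -(1/((n:ℝ)+1)) := by field_simp; ring
        rw [this] at h1
        linarith
    
      push_cast
      linarith [ih]

lemma rankin_fiber (k : ℕ) (s : Finset ℕ) (hs : ∀ p ∈ s, p.Prime ∧ Nat.log 2 p = k) :
    ∑ p ∈ s, Real.log p / p ≤ 2 * Real.log 4 := by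
  have hsub : s ⊆ (2^(k+1)).primesBelow := by
    intro p hp
    obtain ⟨hp1, hp2⟩ := hs p hp
    refine Nat.mem_primesBelow.mpr ⟨?_, hp1⟩
    calc p < 2 ^ (Nat.log 2 p).succ := Nat.lt_pow_succ_log_self one_lt_two p
      _ = 2^(k+1) := by rw [hp2]
  have hnn : ∀ p : ℕ, p.Prime → (0:ℝ) ≤ Real.log p := fun p hp =>
    Real.log_nonneg (by exact_mod_cast hp.one_lt.le)
  calc ∑ p ∈ s, Real.log p / p ≤ ∑ p ∈ s, Real.log (p:ℝ) / 2^k := by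
        refine Finset.sum_le_sum fun p hp => ?_
        obtain ⟨hp1, hp2⟩ := hs p hp
        have h2k : ((2:ℝ)^k) ≤ p := by
          have : 2^k ≤ p := hp2 ▸ Nat.pow_log_le_self 2 hp1.pos.ne'
          exact_mod_cast this
        gcongr
    _ ≤ ∑ p ∈ (2^(k+1) : ℕ).primesBelow, Real.log (p:ℝ) / 2^k := by
        refine Finset.sum_le_sum_of_subset_of_nonneg hsub fun p hp _ => ?_
        exact div_nonneg (hnn p (Nat.prime_of_mem_primesBelow hp)) (by positivity)
    _ = (∑ p ∈ (2^(k+1) : ℕ).primesBelow, Real.log (p:ℝ)) / 2^k := by rw [Finset.sum_div]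
    _ ≤ (((2:ℕ)^(k+1) : ℕ) * Real.log 4) / 2^k := by
        gcongr
        exact rankin_cheb _
    _ = 2 * Real.log 4 := by
        push_cast
        rw [pow_succ]
        field_simp

lemma rankin_sum_logp (N : ℕ) :
    ∑ p ∈ N.primesBelow, Real.log p / p ≤ 2 * Real.log 4 * (Nat.log 2 N + 1) := by
  have hmaps : ∀ p ∈ N.primesBelow, Nat.log 2 p ∈ Finset.range (Nat.log 2 N + 1) := by
    intro p hp
    rw [Finset.mem_range]
    exact Nat.lt_succ_of_le (Nat.log_mono_right (Nat.lt_of_mem_primesBelow hp).le)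
  rw [← Finset.sum_fiberwise_of_maps_to hmaps (fun p => Real.log p / p)]
  calc ∑ k ∈ Finset.range (Nat.log 2 N + 1),
        ∑ p ∈ N.primesBelow.filter (fun p => Nat.log 2 p = k), Real.log p / p
      ≤ ∑ _k ∈ Finset.range (Nat.log 2 N + 1), 2 * Real.log 4 := by
        refine Finset.sum_le_sum fun k _ => rankin_fiber k _ ?_
        intro p hp
        rw [Finset.mem_filter] at hp
        exact ⟨Nat.prime_of_mem_primesBelow hp.1, hp.2⟩
    _ = 2 * Real.log 4 * (Nat.log 2 N + 1) := by
        rw [Finset.sum_const, Finset.card_range]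
        push_cast
        ring

lemma rankin_sum_invp (N : ℕ) (hN : 2 ≤ N) :
    ∑ p ∈ N.primesBelow, (1:ℝ)/p ≤ 4 * (1 + Real.log (Nat.log 2 N)) := by
  set K := Nat.log 2 N with hK
  have hlog2 : (0:ℝ) < Real.log 2 := Real.log_pos one_lt_two
  have hlog4 : Real.log 4 = 2 * Real.log 2 := by
    rw [show (4:ℝ) = 2^(2:ℕ) by norm_num, Real.log_pow]
    push_cast; ring
  have hmaps : ∀ p ∈ N.primesBelow, Nat.log 2 p ∈ Finset.Icc 1 K := by
    intro p hp
    rw [Finset.mem_Icc]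
    exact ⟨Nat.log_pos one_lt_two (Nat.prime_of_mem_primesBelow hp).two_le,
      Nat.log_mono_right (Nat.lt_of_mem_primesBelow hp).le⟩
  rw [← Finset.sum_fiberwise_of_maps_to hmaps (fun p => (1:ℝ)/p)]
  calc ∑ k ∈ Finset.Icc 1 K,
        ∑ p ∈ N.primesBelow.filter (fun p => Nat.log 2 p = k), (1:ℝ)/p
      ≤ ∑ k ∈ Finset.Icc 1 K, 4 * (1/(k:ℝ)) := by
        refine Finset.sum_le_sum fun k hk => ?_
        have hk1 : 1 ≤ k := (Finset.mem_Icc.mp hk).1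
        have hk0 : (0:ℝ) < k := by exact_mod_cast hk1
        have hkl0 : (0:ℝ) < k * Real.log 2 := by positivity
        have hstep : ∀ p ∈ N.primesBelow.filter (fun p => Nat.log 2 p = k),
            (1:ℝ)/p ≤ (Real.log p / p) / (k * Real.log 2) := by
          intro p hp
          rw [Finset.mem_filter] at hp
          have hprime := Nat.prime_of_mem_primesBelow hp.1
          have hp0 : (0:ℝ) < p := by exact_mod_cast hprime.pos
          have hklog : (k:ℝ) * Real.log 2 ≤ Real.log p := by
            have h2k : (2:ℕ)^k ≤ p := hp.2 ▸ Nat.pow_log_le_self 2 hprime.pos.ne'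
            calc (k:ℝ) * Real.log 2 = Real.log ((2:ℝ)^k) := by rw [Real.log_pow]
              _ ≤ Real.log p := Real.log_le_log (by positivity) (by exact_mod_cast h2k)
          rw [le_div_iff₀ hkl0, div_mul_eq_mul_div, one_mul]
          gcongr
        calc ∑ p ∈ N.primesBelow.filter (fun p => Nat.log 2 p = k), (1:ℝ)/p
            ≤ ∑ p ∈ N.primesBelow.filter (fun p => Nat.log 2 p = k),
                (Real.log p / p) / (k * Real.log 2) := Finset.sum_le_sum hstep
          _ = (∑ p ∈ N.primesBelow.filter (fun p => Nat.log 2 p = k),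
                Real.log p / p) / (k * Real.log 2) := by rw [Finset.sum_div]
          _ ≤ (2 * Real.log 4) / (k * Real.log 2) := by
              gcongr
              refine rankin_fiber k _ fun p hp => ?_
              rw [Finset.mem_filter] at hp
              exact ⟨Nat.prime_of_mem_primesBelow hp.1, hp.2⟩
          _ = 4 * (1/(k:ℝ)) := by
              rw [hlog4]
              field_simp
              ring
    _ = 4 * ∑ k ∈ Finset.Icc 1 K, (1:ℝ)/k := by rw [Finset.mul_sum]
    _ ≤ 4 * (1 + Real.log K) := by
        have := rankin_harm K
        linarith

lemma rankin_inv_le_exp {y : ℝ} (h0 : 0 ≤ y) (h1 : y ≤ 3/4) : (1 - y)⁻¹ ≤ Real.exp (4*y) := by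
  have h2 : (0:ℝ) < 1 - y := by linarith
  rw [inv_eq_one_div, div_le_iff₀ h2]
  nlinarith [Real.add_one_le_exp (4*y)]

lemma rankin_exp_sub_one {a : ℝ} (ha : 0 ≤ a) : Real.exp a - 1 ≤ a * Real.exp a := by
  have h1 : (-a + 1) * Real.exp a ≤ Real.exp (-a) * Real.exp a :=
    mul_le_mul_of_nonneg_right (Real.add_one_le_exp (-a)) (Real.exp_pos a).le
  rw [← Real.exp_add] at h1
  simp only [neg_add_cancel, Real.exp_zero] at h1
  nlinarith

lemma rankin_logsq {y : ℝ} (hy : 256 ≤ y) : (Real.log y)^2 ≤ y := by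
  have h0 : (0:ℝ) < y := by linarith
  have h4 : Real.log y ≤ y ^ ((4:ℝ)⁻¹) / (4:ℝ)⁻¹ := Real.log_le_rpow_div h0.le (by norm_num)
  have h4' : Real.log y ≤ 4 * y ^ ((4:ℝ)⁻¹) := by
    have : y ^ ((4:ℝ)⁻¹) / (4:ℝ)⁻¹ = 4 * y ^ ((4:ℝ)⁻¹) := by field_simp
    rw [this] at h4; linarith
  have hrr : (y ^ ((4:ℝ)⁻¹))^(2:ℕ) = y ^ ((2:ℝ)⁻¹) := by
    rw [← Real.rpow_natCast (y ^ ((4:ℝ)⁻¹)) 2, ← Real.rpow_mul h0.le]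
    norm_num
  have hl0 : 0 ≤ Real.log y := Real.log_nonneg (by linarith)
  have hsq : (Real.log y)^2 ≤ 16 * y ^ ((2:ℝ)⁻¹) := by
    calc (Real.log y)^2 ≤ (4 * y ^ ((4:ℝ)⁻¹))^2 := by
          have h40 : 0 ≤ 4 * y ^ ((4:ℝ)⁻¹) := by positivity
          nlinarith
      _ = 16 * (y^((4:ℝ)⁻¹))^(2:ℕ) := by ring
      _ = 16 * y ^ ((2:ℝ)⁻¹) := by rw [hrr]
  have h16 : (16:ℝ) ≤ y ^ ((2:ℝ)⁻¹) := by
    have h1 : (256:ℝ) ^ ((2:ℝ)⁻¹) ≤ y ^ ((2:ℝ)⁻¹) := Real.rpow_le_rpow (by norm_num) hy (by norm_num)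
    have h256 : (256:ℝ) ^ ((2:ℝ)⁻¹) = 16 := by
      rw [show (256:ℝ) = 16^(2:ℕ) by norm_num, ← Real.rpow_natCast (16:ℝ) 2,
        ← Real.rpow_mul (by norm_num : (0:ℝ) ≤ 16)]
      norm_num
    linarith
  have hy2 : y ^ ((2:ℝ)⁻¹) * y ^ ((2:ℝ)⁻¹) = y := by
    rw [← Real.rpow_add h0]
    norm_num
  nlinarith [Real.rpow_nonneg h0.le ((2:ℝ)⁻¹)]

lemma smoothPart_dvd (z : ℝ) {n : ℕ} (hn : n ≠ 0) : smoothPart z n ∣ n := by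
  have h1 : smoothPart z n ∣ ∏ p ∈ n.primeFactors, p ^ n.factorization p :=
    Finset.prod_dvd_prod_of_subset _ _ _ (Finset.filter_subset _ _)
  have h2 : ∏ p ∈ n.primeFactors, p ^ n.factorization p = n := by
    rw [← Nat.support_factorization]
    exact Nat.factorization_prod_pow_eq_self hn
  rwa [h2] at h1

lemma smoothPart_pos (z : ℝ) (n : ℕ) : 0 < smoothPart z n := by
  refine Finset.prod_pos fun p hp => ?_
  have hp' : p.Prime := Nat.prime_of_mem_primeFactors (Finset.mem_filter.mp hp).1
  exact pow_pos hp'.pos _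

lemma smoothPart_mem_smoothNumbers (z : ℝ) {n : ℕ} (hn : n ≠ 0) (hz : 0 ≤ z) :
    smoothPart z n ∈ Nat.smoothNumbers (⌊z⌋₊ + 1) := by
  rw [Nat.mem_smoothNumbers]
  refine ⟨(smoothPart_pos z n).ne', fun q hq => ?_⟩
  have hq' := Nat.mem_primeFactorsList (smoothPart_pos z n).ne' |>.mp hq
  obtain ⟨hqp, hqdvd⟩ := hq'
  obtain ⟨p, hp, hdvd⟩ := hqp.prime.exists_mem_finset_dvd hqdvd
  rw [Finset.mem_filter] at hp
  have hpp : p.Prime := Nat.prime_of_mem_primeFactors hp.1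
  have hqep : q = p := by
    have := hqp.dvd_of_dvd_pow hdvd
    exact (Nat.prime_dvd_prime_iff_eq hqp hpp).mp this
  subst hqep
  have : q ≤ ⌊z⌋₊ := Nat.le_floor hp.2
  omega

set_option maxHeartbeats 2000000 in
/-- Rankin's method bound: for `0 < ε < 1` and `A > 0`, the number of `n ≤ x` whose
`z`-smooth part exceeds `x^ε`, with `z = exp(log x / (ε log log x))`, is
`≪ x (log x)^{-A}` for `x` sufficiently large. -/
theorem stmt5 (ε : ℝ) (hε0 : 0 < ε) (hε1 : ε < 1) (A : ℝ) (hA : 0 < A) :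
    ∃ C > (0 : ℝ), ∃ x₀ : ℝ, ∀ x : ℝ, x₀ ≤ x →
      ({n : ℕ | 1 ≤ n ∧ (n : ℝ) ≤ x ∧
          x ^ ε < (smoothPart (Real.exp (Real.log x / (ε * Real.log (Real.log x)))) n : ℝ)}.ncard
        : ℝ) ≤ C * x * Real.log x ^ (-A) := by
  set t : ℝ := (A + 65) / ε^2 with ht_def
  have ht : 0 < t := by positivity
  refine ⟨Real.exp (40 * Real.log 4 * t * Real.exp (2*t)), Real.exp_pos _,
    max (Real.exp (Real.exp (max (max (1/ε) (2*t)) 1))) (Real.exp 256), ?_⟩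
  intro x hx
  have hx256 : Real.exp 256 ≤ x := le_trans (le_max_right _ _) hx
  have hxe : Real.exp (Real.exp (max (max (1/ε) (2*t)) 1)) ≤ x := le_trans (le_max_left _ _) hx
  have hx0 : (0:ℝ) < x := lt_of_lt_of_le (Real.exp_pos _) hx256
  have hlogx : 256 ≤ Real.log x := by
    calc (256:ℝ) = Real.log (Real.exp 256) := (Real.log_exp _).symm
      _ ≤ Real.log x := Real.log_le_log (Real.exp_pos _) hx256
  have hlogx0 : (0:ℝ) < Real.log x := by linarith
  set L := Real.log (Real.log x) with hL_def
  have hLge : max (max (1/ε) (2*t)) 1 ≤ L := by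
    have h1 : Real.exp (max (max (1/ε) (2*t)) 1) ≤ Real.log x := by
      calc Real.exp (max (max (1/ε) (2*t)) 1)
          = Real.log (Real.exp (Real.exp (max (max (1/ε) (2*t)) 1))) := (Real.log_exp _).symm
        _ ≤ Real.log x := Real.log_le_log (Real.exp_pos _) hxe
    calc max (max (1/ε) (2*t)) 1
        = Real.log (Real.exp (max (max (1/ε) (2*t)) 1)) := (Real.log_exp _).symm
      _ ≤ L := Real.log_le_log (Real.exp_pos _) h1
  have hL1 : 1 ≤ L := le_trans (le_max_right _ _) hLge
  have hLε : 1/ε ≤ L := le_trans (le_trans (le_max_left _ _) (le_max_left _ _)) hLge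
  have hL2t : 2*t ≤ L := le_trans (le_trans (le_max_right _ _) (le_max_left _ _)) hLge
  have hL0 : (0:ℝ) < L := lt_of_lt_of_le one_pos hL1
  have hεL : 1 ≤ ε * L := by
    have h1 := (div_le_iff₀ hε0).mp hLε
    rw [mul_comm]
    exact h1
  have hεL0 : (0:ℝ) < ε * L := by positivity
  set lz := Real.log x / (ε * L) with hlz_def
  have hlz_le : lz ≤ Real.log x := by
    rw [hlz_def]
    exact div_le_self hlogx0.le hεL
  have hLsq : L^2 ≤ Real.log x := rankin_logsq hlogx
  have hlz_ge : L ≤ lz := by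
    rw [hlz_def, le_div_iff₀ hεL0]
    calc L * (ε*L) = ε * L^2 := by ring
      _ ≤ 1 * L^2 := mul_le_mul_of_nonneg_right hε1.le (sq_nonneg L)
      _ = L^2 := one_mul _
      _ ≤ Real.log x := hLsq
  have hlz1 : 1 ≤ lz := le_trans hL1 hlz_ge
  have hlz0 : (0:ℝ) < lz := lt_of_lt_of_le one_pos hlz1
  set z := Real.exp lz with hz_def
  have hz0 : (0:ℝ) < z := Real.exp_pos _
  have hz2 : (2:ℝ) ≤ z := by
    have h1 : (2:ℝ) ≤ Real.exp 1 := by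
      have := Real.add_one_le_exp 1; linarith
    calc (2:ℝ) ≤ Real.exp 1 := h1
      _ ≤ z := Real.exp_le_exp.mpr hlz1
  set σ := t / lz with hσ_def
  have hσ0 : 0 < σ := by positivity
  have hσhalf : σ ≤ 1/2 := by
    rw [hσ_def, div_le_iff₀ hlz0]
    linarith [hlz_ge, hL2t]
  set c := σ - 1 with hc_def
  have hc0 : c < 0 := by rw [hc_def]; linarith
  set N := ⌊z⌋₊ + 1 with hN_def
  have hN2 : 2 ≤ N := by
    have : (2:ℕ) ≤ ⌊z⌋₊ := Nat.le_floor (by exact_mod_cast hz2)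
    omega
  have hNz : (N:ℝ) ≤ Real.exp (2*lz) := by
    have h1 : (N:ℝ) ≤ z + 1 := by
      rw [hN_def]
      push_cast
      have := Nat.floor_le (le_trans (by norm_num) hz2 : (0:ℝ) ≤ z)
      linarith
    have h2 : z + 1 ≤ z*z := by
      have h3 : 2*z ≤ z*z := mul_le_mul_of_nonneg_right hz2 (by linarith)
      linarith
    calc (N:ℝ) ≤ z*z := le_trans h1 h2
      _ = Real.exp (2*lz) := by rw [hz_def, ← Real.exp_add]; ring_nf
  -- the multiplicative function m ↦ m^c
  set f : ℕ →* ℝ :=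
    { toFun := fun n => (n:ℝ)^c,
      map_one' := by simp,
      map_mul' := fun m n => by
        push_cast
        exact Real.mul_rpow (Nat.cast_nonneg m) (Nat.cast_nonneg n) } with hf_def
  have hflt : ∀ {p : ℕ}, p.Prime → ‖f p‖ < 1 := by
    intro p hp
    have hp1 : (1:ℝ) < p := by exact_mod_cast hp.one_lt
    have h1 : (p:ℝ)^c < 1 := Real.rpow_lt_one_of_one_lt_of_neg hp1 hc0
    have h0 : (0:ℝ) ≤ (p:ℝ)^c := Real.rpow_nonneg (by positivity) c
    show ‖(p:ℝ)^c‖ < 1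
    rw [Real.norm_eq_abs, abs_of_nonneg h0]
    exact h1
  have EP := EulerProduct.summable_and_hasSum_smoothNumbers_prod_primesBelow_geometric hflt N
  -- counting setup
  set X := ⌊x⌋₊ with hX_def
  set T := (Finset.Ioc 0 X).filter (fun n => x^ε < (smoothPart z n : ℝ)) with hT_def
  have hsetT : {n : ℕ | 1 ≤ n ∧ (n:ℝ) ≤ x ∧ x^ε < (smoothPart z n : ℝ)} = ↑T := by
    ext n
    simp only [hT_def, Set.mem_setOf_eq, Finset.coe_filter, Finset.mem_Ioc]
    constructor
    · rintro ⟨h1, h2, h3⟩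
      exact ⟨⟨h1, Nat.le_floor h2⟩, h3⟩
    · rintro ⟨⟨h1, h2⟩, h3⟩
      refine ⟨h1, ?_, h3⟩
      calc (n:ℝ) ≤ (X:ℝ) := by exact_mod_cast h2
        _ ≤ x := Nat.floor_le hx0.le
  set M := (Finset.Ioc 0 X).filter (fun m => m ∈ Nat.smoothNumbers N ∧ x^ε < (m:ℝ)) with hM_def
  have hTsub : T ⊆ M.biUnion (fun m => (Finset.Ioc 0 X).filter (fun n => m ∣ n)) := by
    intro n hn
    rw [hT_def, Finset.mem_filter, Finset.mem_Ioc] at hn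
    obtain ⟨⟨hn0, hnX⟩, hsp⟩ := hn
    have hn0' : n ≠ 0 := by omega
    have hdvd : smoothPart z n ∣ n := smoothPart_dvd z hn0'
    have hsp0 : 0 < smoothPart z n := smoothPart_pos z n
    rw [Finset.mem_biUnion]
    refine ⟨smoothPart z n, ?_, ?_⟩
    · rw [hM_def, Finset.mem_filter, Finset.mem_Ioc]
      exact ⟨⟨hsp0, le_trans (Nat.le_of_dvd (by omega) hdvd) hnX⟩,
        smoothPart_mem_smoothNumbers z hn0' hz0.le, hsp⟩
    · rw [Finset.mem_filter, Finset.mem_Ioc]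
      exact ⟨⟨by omega, hnX⟩, hdvd⟩
  have hcard1 : (T.card : ℝ) ≤ ∑ m ∈ M, ((X / m : ℕ) : ℝ) := by
    have h1 : T.card ≤ ∑ m ∈ M, ((Finset.Ioc 0 X).filter (fun n => m ∣ n)).card :=
      le_trans (Finset.card_le_card hTsub) Finset.card_biUnion_le
    have h2 : ∀ m ∈ M, ((Finset.Ioc 0 X).filter (fun n => m ∣ n)).card = X / m :=
      fun m _ => Nat.Ioc_filter_dvd_card_eq_div X m
    have h3 : T.card ≤ ∑ m ∈ M, X / m := h1.trans (le_of_eq (Finset.sum_congr rfl h2))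
    exact_mod_cast h3
  -- pointwise bound
  set E := Real.exp (-((A+65) * L)) with hE_def
  have hεσ : ε * σ * Real.log x = (A+65) * L := by
    have hε0' : ε ≠ 0 := hε0.ne'
    have hL0' : L ≠ 0 := hL0.ne'
    have hlz0' : lz ≠ 0 := hlz0.ne'
    rw [hσ_def, ht_def, hlz_def]
    field_simp
  have hxεσ : (x^ε)^σ = Real.exp ((A+65)*L) := by
    rw [Real.rpow_def_of_pos hx0, Real.rpow_def_of_pos (Real.exp_pos _), Real.log_exp]
    rw [← hεσ]
    ring_nf
  clear_value t L lz z σ c N X T M E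
  have hpoint : ∀ m ∈ M, ((X / m : ℕ) : ℝ) ≤ x * E * (m:ℝ)^c := by
    intro m hm
    rw [hM_def, Finset.mem_filter, Finset.mem_Ioc] at hm
    obtain ⟨⟨hm0, hmX⟩, _hsm, hmε⟩ := hm
    have hm0' : (0:ℝ) < m := by exact_mod_cast hm0
    have hxε0 : (0:ℝ) < x^ε := Real.rpow_pos_of_pos hx0 ε
    have hmons : (m:ℝ)^(-σ) ≤ E := by
      have h2 : (x^ε)^σ ≤ (m:ℝ)^σ := Real.rpow_le_rpow hxε0.le hmε.le hσ0.le
      have h3 : ((m:ℝ)^σ)⁻¹ ≤ ((x^ε)^σ)⁻¹ := by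
        apply inv_anti₀ (Real.rpow_pos_of_pos hxε0 σ) h2
      rw [Real.rpow_neg hm0'.le, hE_def]
      rw [hxεσ] at h3
      rw [← Real.exp_neg] at h3
      exact h3
    calc ((X / m : ℕ) : ℝ) ≤ (X:ℝ) / m := Nat.cast_div_le
      _ ≤ x / m := by
          gcongr
          rw [hX_def]
          exact Nat.floor_le hx0.le
      _ = x * ((m:ℝ)^c * (m:ℝ)^(-σ)) := by
          rw [← Real.rpow_add hm0']
          have hce : c + -σ = -1 := by rw [hc_def]; ring
          rw [hce, Real.rpow_neg_one]
          ring
      _ ≤ x * ((m:ℝ)^c * E) := by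
          have hc' : (0:ℝ) ≤ (m:ℝ)^c := Real.rpow_nonneg hm0'.le c
          have h5 := mul_le_mul_of_nonneg_left hmons hc'
          exact mul_le_mul_of_nonneg_left h5 hx0.le
      _ = x * E * (m:ℝ)^c := by ring
  have hcard2 : (T.card:ℝ) ≤ x * E * ∑ m ∈ M, (m:ℝ)^c := by
    calc (T.card:ℝ) ≤ ∑ m ∈ M, ((X/m : ℕ):ℝ) := hcard1
      _ ≤ ∑ m ∈ M, x * E * (m:ℝ)^c := Finset.sum_le_sum hpoint
      _ = x * E * ∑ m ∈ M, (m:ℝ)^c := by rw [← Finset.mul_sum]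
  -- sum over M ≤ Euler product
  have hMsmooth : ∀ m ∈ M, m ∈ Nat.smoothNumbers N := fun m hm => by
    rw [hM_def] at hm
    exact ((Finset.mem_filter.mp hm).2).1
  have hsumM : ∑ m ∈ M, (m:ℝ)^c ≤ ∏ p ∈ N.primesBelow, (1 - (p:ℝ)^c)⁻¹ := by
    have hEP2 := EP.2
    have hsummable : Summable ((fun m => f m) ∘ (Subtype.val : ↥(Nat.smoothNumbers N) → ℕ)) :=
      ⟨_, hEP2⟩
    have hind : Summable (Set.indicator (Nat.smoothNumbers N) (fun m => f m)) :=
      summable_subtype_iff_indicator.mp hsummable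
    have h1 : ∑ m ∈ M, (m:ℝ)^c
        = ∑ m ∈ M, Set.indicator (Nat.smoothNumbers N) (fun m => f m) m :=
      Finset.sum_congr rfl fun m hm => by
        rw [Set.indicator_of_mem (hMsmooth m hm), hf_def]
        rfl
    have h2 : ∑ m ∈ M, Set.indicator (Nat.smoothNumbers N) (fun m => f m) m
        ≤ ∑' m, Set.indicator (Nat.smoothNumbers N) (fun m => f m) m :=
      Summable.sum_le_tsum M (fun i _ => Set.indicator_apply_nonneg
        (fun _ => Real.rpow_nonneg (Nat.cast_nonneg _) c)) hind
    have h3 : ∑' m, Set.indicator (Nat.smoothNumbers N) (fun m => f m) m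
        = ∏ p ∈ N.primesBelow, (1 - f p)⁻¹ := by
      rw [← tsum_subtype]
      exact hEP2.tsum_eq
    calc ∑ m ∈ M, (m:ℝ)^c = ∑ m ∈ M, Set.indicator (Nat.smoothNumbers N) (fun m => f m) m := h1
      _ ≤ ∑' m, Set.indicator (Nat.smoothNumbers N) (fun m => f m) m := h2
      _ = ∏ p ∈ N.primesBelow, (1 - f p)⁻¹ := h3
      _ = ∏ p ∈ N.primesBelow, (1 - (p:ℝ)^c)⁻¹ := rfl
  -- product bound
  have h2c : (2:ℝ)^c ≤ 3/4 := by
    have h2σ : (2:ℝ)^σ ≤ 3/2 := by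
      calc (2:ℝ)^σ ≤ (2:ℝ)^((1:ℝ)/2) :=
            Real.rpow_le_rpow_of_exponent_le one_le_two (by linarith)
        _ = Real.sqrt 2 := (Real.sqrt_eq_rpow 2).symm
        _ ≤ 3/2 := by
            rw [show (3/2:ℝ) = Real.sqrt ((3/2)^2) by rw [Real.sqrt_sq (by norm_num)]]
            exact Real.sqrt_le_sqrt (by norm_num)
    calc (2:ℝ)^c = (2:ℝ)^σ / 2 := by
          rw [hc_def, Real.rpow_sub (by norm_num), Real.rpow_one]
      _ ≤ (3/2)/2 := by linarith
      _ = 3/4 := by norm_num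
  have hpc34 : ∀ p ∈ N.primesBelow, (0:ℝ) ≤ (p:ℝ)^c ∧ (p:ℝ)^c ≤ 3/4 := by
    intro p hp
    have hp2 : (2:ℝ) ≤ p := by exact_mod_cast (Nat.prime_of_mem_primesBelow hp).two_le
    have hp0 : (0:ℝ) < p := by linarith
    refine ⟨Real.rpow_nonneg hp0.le c, le_trans ?_ h2c⟩
    rw [Real.rpow_def_of_pos hp0, Real.rpow_def_of_pos (by norm_num : (0:ℝ) < 2)]
    apply Real.exp_le_exp.mpr
    have hlp : Real.log 2 ≤ Real.log p := Real.log_le_log (by norm_num) hp2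
    exact mul_le_mul_of_nonpos_right hlp hc0.le
  set Sp := ∑ p ∈ N.primesBelow, (p:ℝ)^c with hSp_def
  have hprod : ∏ p ∈ N.primesBelow, (1 - (p:ℝ)^c)⁻¹ ≤ Real.exp (4 * Sp) := by
    calc ∏ p ∈ N.primesBelow, (1 - (p:ℝ)^c)⁻¹
        ≤ ∏ p ∈ N.primesBelow, Real.exp (4 * (p:ℝ)^c) := by
          refine Finset.prod_le_prod (fun p hp => ?_) (fun p hp => ?_)
          · have := hpc34 p hp
            have : (0:ℝ) < 1 - (p:ℝ)^c := by linarith [this.2]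
            positivity
          · exact rankin_inv_le_exp (hpc34 p hp).1 (hpc34 p hp).2
      _ = Real.exp (∑ p ∈ N.primesBelow, 4 * (p:ℝ)^c) := (Real.exp_sum _ _).symm
      _ = Real.exp (4 * Sp) := by rw [← Finset.mul_sum]
  -- bound Sp
  set K2 := Nat.log 2 N with hK2_def
  have hK2pos : 0 < K2 := Nat.log_pos one_lt_two hN2
  have hK2lz : (K2:ℝ) ≤ 4 * lz := by
    have h2K : ((2:ℕ)^K2 : ℝ) ≤ (N:ℝ) := by
      exact_mod_cast Nat.pow_log_le_self 2 (by omega : N ≠ 0)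
    have hlogN : (K2:ℝ) * Real.log 2 ≤ 2 * lz := by
      calc (K2:ℝ) * Real.log 2 = Real.log ((2:ℝ)^K2) := by rw [Real.log_pow]
        _ ≤ Real.log (N:ℝ) := Real.log_le_log (by positivity) (by exact_mod_cast h2K)
        _ ≤ Real.log (Real.exp (2*lz)) := Real.log_le_log (by positivity) hNz
        _ = 2*lz := Real.log_exp _
    have hlog2half : (1/2:ℝ) ≤ Real.log 2 := by
      have := Real.log_two_gt_d9; linarith
    have hK20 : (0:ℝ) ≤ K2 := Nat.cast_nonneg _
    linarith [mul_le_mul_of_nonneg_left hlog2half hK20, hlogN]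
  clear_value K2
  have hlogK2 : Real.log K2 ≤ 2 + L := by
    have hK20 : (0:ℝ) < K2 := by exact_mod_cast hK2pos
    calc Real.log K2 ≤ Real.log (4*lz) := Real.log_le_log hK20 hK2lz
      _ = Real.log 4 + Real.log lz := Real.log_mul (by norm_num) hlz0.ne'
      _ ≤ 2 + L := by
          have h4 : Real.log 4 ≤ 2 := by
            rw [show (4:ℝ) = 2^(2:ℕ) by norm_num, Real.log_pow]
            have := Real.log_two_lt_d9
            push_cast
            linarith
          have hlzL : Real.log lz ≤ L := by
            rw [hL_def]
            exact Real.log_le_log hlz0 hlz_le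
          linarith
  have hsum_inv : ∑ p ∈ N.primesBelow, (1:ℝ)/p ≤ 16 * L := by
    have := rankin_sum_invp N hN2
    rw [← hK2_def] at this
    calc ∑ p ∈ N.primesBelow, (1:ℝ)/p ≤ 4 * (1 + Real.log K2) := this
      _ ≤ 4 * (1 + (2 + L)) := by linarith
      _ ≤ 16 * L := by linarith
  have hNσ : (N:ℝ)^σ ≤ Real.exp (2*t) := by
    calc (N:ℝ)^σ ≤ (Real.exp (2*lz))^σ := Real.rpow_le_rpow (by positivity) hNz hσ0.le
      _ = Real.exp (2*lz*σ) := by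
          rw [Real.rpow_def_of_pos (Real.exp_pos _), Real.log_exp]
      _ = Real.exp (2*t) := by
          rw [hσ_def]
          congr 1
          field_simp
  have hSp : Sp ≤ 16*L + 10*Real.log 4*t*Real.exp (2*t) := by
    have hpt : ∀ p ∈ N.primesBelow, (p:ℝ)^c
        ≤ 1/p + (σ * Real.exp (2*t)) * (Real.log p / p) := by
      intro p hp
      have hp2 : (2:ℝ) ≤ p := by exact_mod_cast (Nat.prime_of_mem_primesBelow hp).two_le
      have hp0 : (0:ℝ) < p := by linarith
      have hlp0 : 0 ≤ Real.log p := Real.log_nonneg (by linarith)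
      have h1 : (p:ℝ)^c = (p:ℝ)^σ / p := by
        rw [hc_def, Real.rpow_sub hp0, Real.rpow_one]
      have hps : (p:ℝ)^σ = Real.exp (σ * Real.log p) := by
        rw [Real.rpow_def_of_pos hp0]; ring_nf
      have ha : 0 ≤ σ * Real.log p := mul_nonneg hσ0.le hlp0
      have h3 := rankin_exp_sub_one ha
      have h4 : Real.exp (σ * Real.log p) ≤ Real.exp (2*t) := by
        rw [← hps]
        calc (p:ℝ)^σ ≤ (N:ℝ)^σ := by
              apply Real.rpow_le_rpow hp0.le ?_ hσ0.le
              exact_mod_cast (Nat.lt_of_mem_primesBelow hp).le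
          _ ≤ Real.exp (2*t) := hNσ
      have h2 : (p:ℝ)^σ ≤ 1 + σ * Real.log p * Real.exp (2*t) := by
        rw [hps]
        have h5 : (σ * Real.log p) * Real.exp (σ * Real.log p)
            ≤ (σ * Real.log p) * Real.exp (2*t) := mul_le_mul_of_nonneg_left h4 ha
        linarith
      calc (p:ℝ)^c = (p:ℝ)^σ/p := h1
        _ ≤ (1 + σ*Real.log p*Real.exp (2*t))/p := by gcongr
        _ = 1/p + (σ*Real.exp (2*t))*(Real.log p/p) := by field_simp
    have hσe0 : 0 ≤ σ * Real.exp (2*t) := mul_nonneg hσ0.le (Real.exp_pos _).le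
    have hlog40 : (0:ℝ) ≤ Real.log 4 := Real.log_nonneg (by norm_num)
    calc Sp ≤ ∑ p ∈ N.primesBelow, (1/p + (σ * Real.exp (2*t)) * (Real.log p / p)) :=
          Finset.sum_le_sum hpt
      _ = (∑ p ∈ N.primesBelow, (1:ℝ)/p)
          + (σ * Real.exp (2*t)) * ∑ p ∈ N.primesBelow, Real.log p / p := by
          rw [Finset.sum_add_distrib, Finset.mul_sum]
      _ ≤ 16*L + (σ * Real.exp (2*t)) * (2*Real.log 4*(K2+1)) := by
          have hlogp_nonneg : 0 ≤ 2*Real.log 4*((K2:ℝ)+1) := by positivity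
          have hb := rankin_sum_logp N
          rw [← hK2_def] at hb
          have := mul_le_mul_of_nonneg_left hb hσe0
          linarith [hsum_inv]
      _ ≤ 16*L + 10*Real.log 4*t*Real.exp (2*t) := by
          have hK2' : (K2:ℝ)+1 ≤ 5*lz := by linarith
          have hσK : σ * ((K2:ℝ)+1) ≤ 5*t := by
            rw [hσ_def, div_mul_eq_mul_div, div_le_iff₀ hlz0]
            calc t * ((K2:ℝ)+1) ≤ t * (5*lz) := mul_le_mul_of_nonneg_left hK2' ht.le
              _ = 5*t*lz := by ring
          have hmul : (σ * Real.exp (2*t)) * (2*Real.log 4*((K2:ℝ)+1))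
              ≤ 10*Real.log 4*t*Real.exp (2*t) := by
            calc (σ * Real.exp (2*t)) * (2*Real.log 4*((K2:ℝ)+1))
                = (2*Real.log 4*Real.exp (2*t)) * (σ*((K2:ℝ)+1)) := by ring
              _ ≤ (2*Real.log 4*Real.exp (2*t)) * (5*t) := by
                  refine mul_le_mul_of_nonneg_left hσK ?_
                  positivity
              _ = 10*Real.log 4*t*Real.exp (2*t) := by ring
          linarith
  -- final assembly
  have hxE0 : 0 ≤ x * E := by
    rw [hE_def]
    positivity
  have hfin : (T.card:ℝ) ≤ x * E * Real.exp (4*(16*L + 10*Real.log 4*t*Real.exp (2*t))) := by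
    calc (T.card:ℝ) ≤ x * E * ∑ m ∈ M, (m:ℝ)^c := hcard2
      _ ≤ x * E * ∏ p ∈ N.primesBelow, (1 - (p:ℝ)^c)⁻¹ := by
          exact mul_le_mul_of_nonneg_left hsumM hxE0
      _ ≤ x * E * Real.exp (4 * Sp) := mul_le_mul_of_nonneg_left hprod hxE0
      _ ≤ x * E * Real.exp (4*(16*L + 10*Real.log 4*t*Real.exp (2*t))) := by
          have := Real.exp_le_exp.mpr (by linarith [hSp] : 4*Sp ≤ 4*(16*L + 10*Real.log 4*t*Real.exp (2*t)))
          exact mul_le_mul_of_nonneg_left this hxE0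
  have hEexp : E * Real.exp (4*(16*L + 10*Real.log 4*t*Real.exp (2*t)))
      = Real.exp (40 * Real.log 4 * t * Real.exp (2*t)) * Real.exp (-(A+1)*L) := by
    rw [hE_def, ← Real.exp_add, ← Real.exp_add]
    congr 1
    ring
  have hlast : Real.exp (-(A+1)*L) ≤ Real.log x ^ (-A) := by
    have h1 : Real.log x ^ (-A) = Real.exp (-A * L) := by
      rw [Real.rpow_def_of_pos hlogx0, hL_def]
      ring_nf
    rw [h1]
    apply Real.exp_le_exp.mpr
    have h2 : A * L ≤ (A+1) * L := mul_le_mul_of_nonneg_right (by linarith) hL0.le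
    linarith
  calc ({n : ℕ | 1 ≤ n ∧ (n:ℝ) ≤ x ∧ x^ε < (smoothPart z n : ℝ)}.ncard : ℝ)
      = (T.card:ℝ) := by rw [hsetT, Set.ncard_coe_finset]
    _ ≤ x * E * Real.exp (4*(16*L + 10*Real.log 4*t*Real.exp (2*t))) := hfin
    _ = x * (Real.exp (40 * Real.log 4 * t * Real.exp (2*t)) * Real.exp (-(A+1)*L)) := by
        rw [mul_assoc, hEexp]
    _ ≤ x * (Real.exp (40 * Real.log 4 * t * Real.exp (2*t)) * Real.log x ^ (-A)) := by
        have := mul_le_mul_of_nonneg_left hlast (Real.exp_pos (40 * Real.log 4 * t * Real.exp (2*t))).le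
        exact mul_le_mul_of_nonneg_left this hx0.le
    _ = Real.exp (40 * Real.log 4 * t * Real.exp (2*t)) * x * Real.log x ^ (-A) := by ring
end

section
/- For every integer m ≥ 2 there is a constant C > 0 such that for all reals x ≥ 2: Σ_{n ≤ x} τ_m(n)⁴ ≤ C · x · (log x)^{m⁴ - 1}. -/
/-- `tauM m n` is `τ_m(n)`: the number of ordered `m`-tuples `(d₁, …, d_m)` of positive
integers with `d₁ ⋯ d_m = n`. -/
def tauM (m n : ℕ) : ℕ :=
  ((Fintype.piFinset fun _ : Fin m => Finset.Icc 1 n).filter fun t => ∏ i, t i = n).card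

open Finset

lemma exists_factor_prod {ι : Type*} [DecidableEq ι] (s : Finset ι) (f : ι → ℕ) (d : ℕ)
    (hd : d ∣ ∏ j ∈ s, f j) :
    ∃ g : ι → ℕ, (∀ j ∈ s, g j ∣ f j) ∧ ∏ j ∈ s, g j = d := by
  induction s using Finset.induction generalizing d with
  | empty =>
    refine ⟨fun _ => 1, by simp, ?_⟩
    simpa using (Nat.eq_one_of_dvd_one (by simpa using hd)).symm
  | @insert a s ha ih =>
    rw [Finset.prod_insert ha] at hd
    obtain ⟨d1, d2, hd1, hd2, rfl⟩ := exists_dvd_and_dvd_of_dvd_mul hd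
    obtain ⟨g, hg1, hg2⟩ := ih d2 hd2
    refine ⟨Function.update g a d1, ?_, ?_⟩
    · intro j hj
      rcases Finset.mem_insert.mp hj with rfl | hj
      · simp [hd1]
      · rw [Function.update_of_ne (fun h : j = a => ha (h ▸ hj))]
        exact hg1 j hj
    · rw [Finset.prod_insert ha, Function.update_self,
        Finset.prod_congr rfl fun j hj => Function.update_of_ne (fun h : j = a => ha (h ▸ hj)) _ _,
        hg2]

/-- Transportation: a grid of positive naturals with prescribed row and column products. -/
lemma exists_grid : ∀ (a : ℕ) {b : ℕ} (s : Fin a → ℕ) (t : Fin b → ℕ),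
    (∀ j, t j ≠ 0) → ∏ i, s i = ∏ j, t j →
    ∃ g : Fin a → Fin b → ℕ, (∀ i, ∏ j, g i j = s i) ∧ (∀ j, ∏ i, g i j = t j) := by
  intro a
  induction a with
  | zero =>
    intro b s t ht h
    simp only [Finset.univ_eq_empty, Finset.prod_empty] at h
    refine ⟨fun i => i.elim0, fun i => i.elim0, fun j => ?_⟩
    simp only [Finset.univ_eq_empty, Finset.prod_empty]
    exact ((Finset.prod_eq_one_iff_of_one_le' fun j _ =>
      Nat.one_le_iff_ne_zero.mpr (ht j)).mp h.symm j (Finset.mem_univ j)).symm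
  | succ a ih =>
    intro b s t ht h
    have hs0 : s 0 ∣ ∏ j, t j := by
      rw [← h, Fin.prod_univ_succ]
      exact Dvd.intro _ rfl
    obtain ⟨g0, hg0, hg0p⟩ := exists_factor_prod Finset.univ t (s 0) hs0
    have hg0dvd : ∀ j, g0 j ∣ t j := fun j => hg0 j (Finset.mem_univ j)
    have hg0ne : ∀ j, g0 j ≠ 0 := fun j h0 => ht j (by
      have := hg0dvd j; rw [h0] at this; exact Nat.eq_zero_of_zero_dvd this)
    have hprod : ∏ i, s (Fin.succ i) = ∏ j, t j / g0 j := by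
      have hne : s 0 ≠ 0 := by
        rw [← hg0p]; exact Finset.prod_ne_zero_iff.mpr fun j _ => hg0ne j
      have key : s 0 * ∏ i, s (Fin.succ i) = s 0 * ∏ j, t j / g0 j := by
        rw [← Fin.prod_univ_succ, h]
        conv_rhs => rw [← hg0p, ← Finset.prod_mul_distrib]
        exact Finset.prod_congr rfl fun j _ => (Nat.mul_div_cancel' (hg0dvd j)).symm
      exact Nat.eq_of_mul_eq_mul_left (Nat.pos_of_ne_zero hne) key
    obtain ⟨g', hr, hc⟩ := ih (fun i => s (Fin.succ i)) (fun j => t j / g0 j)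
      (fun j => Nat.div_ne_zero_iff.mpr ⟨hg0ne j,
        Nat.le_of_dvd (Nat.pos_of_ne_zero (ht j)) (hg0dvd j)⟩) hprod
    refine ⟨Fin.cons g0 g', fun i => ?_, fun j => ?_⟩
    · induction i using Fin.cases with
      | zero => simpa using hg0p
      | succ i => simpa using hr i
    · rw [Fin.prod_univ_succ]
      simp only [Fin.cons_zero, Fin.cons_succ]
      rw [hc j]
      exact Nat.mul_div_cancel' (hg0dvd j)


lemma tauM_mul_le (a b n : ℕ) : tauM a n * tauM b n ≤ tauM (a * b) n := by
  classical
  set e : Fin a × Fin b ≃ Fin (a * b) := finProdFinEquiv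
  set Sa := (Fintype.piFinset fun _ : Fin a => Finset.Icc 1 n).filter fun t => ∏ i, t i = n
  set Sb := (Fintype.piFinset fun _ : Fin b => Finset.Icc 1 n).filter fun t => ∏ i, t i = n
  set Sab := (Fintype.piFinset fun _ : Fin (a * b) => Finset.Icc 1 n).filter
    fun t => ∏ i, t i = n
  -- margins map
  set G : (Fin (a * b) → ℕ) → (Fin a → ℕ) × (Fin b → ℕ) :=
    fun q => (fun i => ∏ j, q (e (i, j)), fun j => ∏ i, q (e (i, j))) with hG
  have hsub : Sa ×ˢ Sb ⊆ Sab.image G := by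
    intro p hp
    rw [Finset.mem_product] at hp
    obtain ⟨hp1, hp2⟩ := hp
    rw [Finset.mem_filter, Fintype.mem_piFinset] at hp1 hp2
    obtain ⟨hmem1, hprod1⟩ := hp1
    obtain ⟨hmem2, hprod2⟩ := hp2
    have ht0 : ∀ j, p.2 j ≠ 0 := fun j =>
      Nat.one_le_iff_ne_zero.mp (Finset.mem_Icc.mp (hmem2 j)).1
    obtain ⟨g, hr, hc⟩ := exists_grid a p.1 p.2 ht0 (hprod1.trans hprod2.symm)
    have hgne : ∀ i j, g i j ≠ 0 := by
      intro i j h0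
      apply ht0 j
      rw [← hc j]
      exact Finset.prod_eq_zero (Finset.mem_univ i) h0
    have hgle : ∀ i j, g i j ≤ n := by
      intro i j
      calc g i j ≤ ∏ j', g i j' := Finset.single_le_prod'
            (fun j' _ => Nat.one_le_iff_ne_zero.mpr (hgne i j')) (Finset.mem_univ j)
        _ = p.1 i := hr i
        _ ≤ n := (Finset.mem_Icc.mp (hmem1 i)).2
    refine Finset.mem_image.mpr ⟨fun k => g (e.symm k).1 (e.symm k).2, ?_, ?_⟩
    · rw [Finset.mem_filter, Fintype.mem_piFinset]
      constructor
      · intro k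
        exact Finset.mem_Icc.mpr ⟨Nat.one_le_iff_ne_zero.mpr (hgne _ _), hgle _ _⟩
      · rw [← e.prod_comp fun k => g (e.symm k).1 (e.symm k).2]
        simp only [Equiv.symm_apply_apply]
        rw [Fintype.prod_prod_type]
        rw [Finset.prod_congr rfl fun i _ => hr i]
        exact hprod1
    · ext k
      · simp only [hG, Equiv.symm_apply_apply, hr]
      · simp only [hG, Equiv.symm_apply_apply, hc]
  calc tauM a n * tauM b n = (Sa ×ˢ Sb).card := (Finset.card_product Sa Sb).symm
    _ ≤ (Sab.image G).card := Finset.card_le_card hsub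
    _ ≤ Sab.card := Finset.card_image_le
    _ = tauM (a * b) n := rfl


/-- tuples with entries ≥ 1 and product ≤ N -/
def tupSet (M N : ℕ) : Finset (Fin M → ℕ) :=
  (Fintype.piFinset fun _ : Fin M => Finset.Icc 1 N).filter fun t => ∏ i, t i ≤ N

lemma sum_tauM_eq (M N : ℕ) :
    ∑ n ∈ Finset.Icc 1 N, tauM M n = (tupSet M N).card := by
  classical
  rw [Finset.card_eq_sum_card_fiberwise (f := fun t : Fin M → ℕ => ∏ i, t i)
    (t := Finset.Icc 1 N) ?_]
  · refine Finset.sum_congr rfl fun n hn => ?_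
    rw [Finset.mem_Icc] at hn
    refine congrArg Finset.card ?_
    ext t
    simp only [tupSet, Finset.mem_filter, Fintype.mem_piFinset, Finset.mem_Icc]
    constructor
    · rintro ⟨hmem, hprod⟩
      exact ⟨⟨fun i => ⟨(hmem i).1, (hmem i).2.trans hn.2⟩, hprod ▸ hn.2⟩, hprod⟩
    · rintro ⟨⟨hmem, hle⟩, hprod⟩
      refine ⟨fun i => ⟨(hmem i).1, ?_⟩, hprod⟩
      calc t i ≤ ∏ j, t j := Finset.single_le_prod' (fun j _ => (hmem j).1) (Finset.mem_univ i)
        _ = n := hprod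
  · intro t ht
    simp only [Finset.mem_coe, tupSet, Finset.mem_filter, Fintype.mem_piFinset, Finset.mem_Icc] at ht
    exact Finset.mem_Icc.mpr ⟨Finset.one_le_prod' fun i _ => (ht.1 i).1, ht.2⟩

lemma tupSet_card_succ (M N : ℕ) :
    (tupSet (M + 1) N).card = ∑ d ∈ Finset.Icc 1 N, (tupSet M (N / d)).card := by
  classical
  rw [Finset.card_eq_sum_card_fiberwise (f := fun t : Fin (M + 1) → ℕ => t 0)
    (t := Finset.Icc 1 N) ?_]
  · refine Finset.sum_congr rfl fun d hd => ?_
    rw [Finset.mem_Icc] at hd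
    have hd0 : 0 < d := hd.1
    refine Finset.card_bij (fun t _ => Fin.tail t) ?_ ?_ ?_
    · intro t ht
      simp only [Finset.mem_filter, tupSet, Fintype.mem_piFinset, Finset.mem_Icc] at ht ⊢
      obtain ⟨⟨hmem, hle⟩, ht0⟩ := ht
      rw [Fin.prod_univ_succ, ht0] at hle
      have htail : ∏ i, Fin.tail t i ≤ N / d := (Nat.le_div_iff_mul_le hd0).mpr
        (by rw [mul_comm]; exact hle)
      refine ⟨fun i => ⟨(hmem i.succ).1, ?_⟩, htail⟩
      calc Fin.tail t i ≤ ∏ j, Fin.tail t j :=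
            Finset.single_le_prod' (fun j _ => (hmem j.succ).1) (Finset.mem_univ i)
        _ ≤ N / d := htail
    · intro t1 h1 t2 h2 heq
      simp only [Finset.mem_filter] at h1 h2
      have heq' : Fin.tail t1 = Fin.tail t2 := heq
      rw [← Fin.cons_self_tail t1, ← Fin.cons_self_tail t2, h1.2, h2.2, heq']
    · intro u hu
      simp only [tupSet, Finset.mem_filter, Fintype.mem_piFinset, Finset.mem_Icc] at hu
      refine ⟨Fin.cons d u, ?_, by ext i; simp [Fin.tail]⟩
      simp only [Finset.mem_filter, tupSet, Fintype.mem_piFinset, Finset.mem_Icc, Fin.cons_zero,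
        and_true]
      refine ⟨?_, ?_⟩
      · intro i
        induction i using Fin.cases with
        | zero => simpa using hd
        | succ i =>
          simp only [Fin.cons_succ]
          exact ⟨(hu.1 i).1, (hu.1 i).2.trans (Nat.div_le_self N d)⟩
      · rw [Fin.prod_univ_succ]
        simp only [Fin.cons_zero, Fin.cons_succ]
        calc d * ∏ i, u i ≤ d * (N / d) := Nat.mul_le_mul_left d hu.2
          _ ≤ N := Nat.mul_div_le N d
  · intro t ht
    simp only [Finset.mem_coe, tupSet, Finset.mem_filter, Fintype.mem_piFinset] at ht
    exact ht.1 0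

lemma tupSet_card_le (M : ℕ) : ∀ x : ℝ, 1 ≤ x →
    ((tupSet (M + 1) ⌊x⌋₊).card : ℝ) ≤ x * (1 + Real.log x) ^ M := by
  induction M with
  | zero =>
    intro x hx
    have h1 : tupSet 1 ⌊x⌋₊ = Fintype.piFinset fun _ : Fin 1 => Finset.Icc 1 ⌊x⌋₊ := by
      apply Finset.filter_true_of_mem
      intro t ht
      rw [Fintype.mem_piFinset] at ht
      rw [Fin.prod_univ_one]
      exact (Finset.mem_Icc.mp (ht 0)).2
    rw [h1, Fintype.card_piFinset]
    simp only [Fin.prod_univ_one, Nat.card_Icc, Nat.add_sub_cancel, pow_zero, mul_one]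
    exact (Nat.floor_le (by linarith)).trans (le_refl x)
  | succ M ih =>
    intro x hx
    have hlog : 0 ≤ Real.log x := Real.log_nonneg hx
    rw [tupSet_card_succ]
    push_cast
    have hstep : ∀ d ∈ Finset.Icc 1 ⌊x⌋₊,
        ((tupSet (M + 1) (⌊x⌋₊ / d)).card : ℝ) ≤ (x / d) * (1 + Real.log x) ^ M := by
      intro d hd
      rw [Finset.mem_Icc] at hd
      have hd0 : (0 : ℝ) < d := by exact_mod_cast hd.1
      have hdx : (d : ℝ) ≤ x := by
        have h1 : (d : ℝ) ≤ (⌊x⌋₊ : ℝ) := by exact_mod_cast hd.2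
        exact h1.trans (Nat.floor_le (by linarith))
      have hxd : 1 ≤ x / d := (one_le_div hd0).mpr hdx
      have := ih (x / d) hxd
      rw [Nat.floor_div_natCast x d] at this
      have hll : Real.log (x / d) ≤ Real.log x :=
        Real.log_le_log (by positivity) (div_le_self (by linarith) (by exact_mod_cast hd.1))
      have h0 : (0 : ℝ) ≤ 1 + Real.log (x / d) := by linarith [Real.log_nonneg hxd]
      refine this.trans (mul_le_mul_of_nonneg_left ?_ (by positivity))
      exact pow_le_pow_left₀ h0 (by linarith) M
    calc (∑ d ∈ Finset.Icc 1 ⌊x⌋₊, ((tupSet (M + 1) (⌊x⌋₊ / d)).card : ℝ))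
        ≤ ∑ d ∈ Finset.Icc 1 ⌊x⌋₊, (x / d) * (1 + Real.log x) ^ M :=
          Finset.sum_le_sum hstep
      _ = x * (1 + Real.log x) ^ M * ∑ d ∈ Finset.Icc 1 ⌊x⌋₊, (d : ℝ)⁻¹ := by
          rw [Finset.mul_sum]; exact Finset.sum_congr rfl fun d _ => by ring
      _ ≤ x * (1 + Real.log x) ^ M * (1 + Real.log x) := by
          have hharm : ∑ d ∈ Finset.Icc 1 ⌊x⌋₊, (d : ℝ)⁻¹ ≤ 1 + Real.log x := by
            have := harmonic_floor_le_one_add_log x hx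
            rw [harmonic_eq_sum_Icc] at this
            exact_mod_cast (by push_cast at this ⊢; exact this)
          have hpos : (0:ℝ) ≤ x * (1 + Real.log x) ^ M :=
            mul_nonneg (by linarith) (pow_nonneg (by linarith) M)
          exact mul_le_mul_of_nonneg_left hharm hpos
      _ = x * (1 + Real.log x) ^ (M + 1) := by ring

lemma tauM_pow4_le (m n : ℕ) : tauM m n ^ 4 ≤ tauM (m ^ 4) n := by
  have h2 : tauM m n ^ 2 ≤ tauM (m * m) n := by rw [sq]; exact tauM_mul_le m m n
  have h4 : tauM (m * m) n ^ 2 ≤ tauM (m * m * (m * m)) n := by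
    rw [sq]; exact tauM_mul_le (m * m) (m * m) n
  calc tauM m n ^ 4 = (tauM m n ^ 2) ^ 2 := by ring
    _ ≤ tauM (m * m) n ^ 2 := Nat.pow_le_pow_left h2 2
    _ ≤ tauM (m * m * (m * m)) n := h4
    _ = tauM (m ^ 4) n := by ring_nf

/-- For every `m ≥ 2` one has `Σ_{n ≤ x} τ_m(n)⁴ ≪ x (log x)^{m⁴ - 1}`. -/
theorem stmt6 (m : ℕ) (hm : 2 ≤ m) :
    ∃ C > (0 : ℝ), ∀ x : ℝ, 2 ≤ x →
      (∑ n ∈ Finset.Icc 1 ⌊x⌋₊, (tauM m n : ℝ) ^ 4)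
        ≤ C * x * Real.log x ^ (m ^ 4 - 1) := by
  have hlog2 : 0 < Real.log 2 := Real.log_pos (by norm_num)
  refine ⟨(1 + (Real.log 2)⁻¹) ^ (m ^ 4 - 1), by positivity, fun x hx => ?_⟩
  have hx1 : (1 : ℝ) ≤ x := by linarith
  have hlogx : Real.log 2 ≤ Real.log x := Real.log_le_log (by norm_num) hx
  have hlogxpos : 0 < Real.log x := lt_of_lt_of_le hlog2 hlogx
  have hmpos : 0 < m := by omega
  have hMK : m ^ 4 = (m ^ 4 - 1) + 1 := (Nat.succ_pred_eq_of_pos (by positivity)).symm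
  have step1 : (∑ n ∈ Finset.Icc 1 ⌊x⌋₊, (tauM m n : ℝ) ^ 4)
      ≤ ∑ n ∈ Finset.Icc 1 ⌊x⌋₊, (tauM (m ^ 4) n : ℝ) := by
    refine Finset.sum_le_sum fun n _ => ?_
    exact_mod_cast tauM_pow4_le m n
  have step2 : (∑ n ∈ Finset.Icc 1 ⌊x⌋₊, (tauM (m ^ 4) n : ℝ))
      = ((tupSet (m ^ 4) ⌊x⌋₊).card : ℝ) := by
    exact_mod_cast congrArg (Nat.cast : ℕ → ℝ) (sum_tauM_eq (m ^ 4) ⌊x⌋₊)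
  have step3 : ((tupSet (m ^ 4) ⌊x⌋₊).card : ℝ)
      ≤ x * (1 + Real.log x) ^ (m ^ 4 - 1) := by
    conv_lhs => rw [hMK]
    exact tupSet_card_le (m ^ 4 - 1) x hx1
  have hle : 1 + Real.log x ≤ (1 + (Real.log 2)⁻¹) * Real.log x := by
    have h1 : 1 ≤ Real.log x / Real.log 2 := (one_le_div hlog2).mpr hlogx
    have h2 : (Real.log 2)⁻¹ * Real.log x = Real.log x / Real.log 2 := by ring
    nlinarith
  have hpow : (1 + Real.log x) ^ (m ^ 4 - 1)
      ≤ ((1 + (Real.log 2)⁻¹) * Real.log x) ^ (m ^ 4 - 1) :=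
    pow_le_pow_left₀ (by linarith) hle _
  calc (∑ n ∈ Finset.Icc 1 ⌊x⌋₊, (tauM m n : ℝ) ^ 4)
      ≤ x * (1 + Real.log x) ^ (m ^ 4 - 1) := by
        rw [← step2] at step3; exact (step1.trans (le_of_eq step2)).trans (step2 ▸ step3)
    _ ≤ x * ((1 + (Real.log 2)⁻¹) * Real.log x) ^ (m ^ 4 - 1) :=
        mul_le_mul_of_nonneg_left hpow (by linarith)
    _ = (1 + (Real.log 2)⁻¹) ^ (m ^ 4 - 1) * x * Real.log x ^ (m ^ 4 - 1) := by
        rw [mul_pow]; ring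
end

section
/- For every integer m ≥ 1 there is a constant C > 0 such that for every multiplicative function λ : ℕ₊ → ℂ satisfying |λ(n)| ≤ τ_m(n) for all n ≥ 1, and every real z ≥ 2: the (convergent) sum of |λ(a)|/φ(a) over all z-smooth positive integers a satisfies Σ_{a z-smooth} |λ(a)|/φ(a) ≤ C · Π_{p ≤ z, p prime} (1 + |λ(p)|/p). -/
lemma tauM_le_card_divisors (m n : ℕ) (hn : 1 ≤ n) :
    tauM m n ≤ n.divisors.card ^ m := by
  classical
  have hsub : ((Fintype.piFinset fun _ : Fin m => Finset.Icc 1 n).filter fun t => ∏ i, t i = n)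
      ⊆ Fintype.piFinset fun _ : Fin m => n.divisors := by
    intro t ht
    simp only [Finset.mem_filter, Fintype.mem_piFinset] at ht ⊢
    intro i
    rw [Nat.mem_divisors]
    exact ⟨ht.2 ▸ Finset.dvd_prod_of_mem t (Finset.mem_univ i), by omega⟩
  calc tauM m n ≤ (Fintype.piFinset fun _ : Fin m => n.divisors).card :=
        Finset.card_le_card hsub
    _ = n.divisors.card ^ m := by
        simp [Fintype.card_piFinset, Finset.prod_const]

lemma tauM_prime_pow_le (m k p : ℕ) (hp : p.Prime) :
    tauM m (p ^ k) ≤ (k + 1) ^ m := by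
  have h := tauM_le_card_divisors m (p ^ k) (Nat.one_le_iff_ne_zero.mpr (pow_ne_zero k hp.pos.ne'))
  rwa [Nat.divisors_prime_pow hp, Finset.card_map, Finset.card_range] at h


lemma sumg (m : ℕ) (c : ℕ) : Summable fun k : ℕ => ((k : ℝ) + c) ^ m * (1/2 : ℝ) ^ k := by
  have base : Summable fun n : ℕ => (n : ℝ) ^ m * (1/2 : ℝ) ^ n :=
    summable_pow_mul_geometric_of_norm_lt_one m
      (by rw [Real.norm_eq_abs]; rw [abs_of_pos]; norm_num; norm_num)
  have hsh : Summable fun k : ℕ => ((k + c : ℕ) : ℝ) ^ m * (1/2 : ℝ) ^ (k + c) :=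
    (summable_nat_add_iff c).mpr base
  have := hsh.mul_right ((2:ℝ) ^ c)
  refine this.congr fun k => ?_
  push_cast
  have h2 : ((1:ℝ)/2) ^ c * 2 ^ c = 1 := by
    rw [div_pow, one_pow, div_mul_cancel₀]
    positivity
  calc ((k:ℝ) + c) ^ m * (1/2) ^ (k + c) * 2 ^ c
      = ((k:ℝ) + c) ^ m * (1/2) ^ k * ((1/2) ^ c * 2 ^ c) := by ring
    _ = ((k:ℝ) + c) ^ m * (1/2) ^ k := by rw [h2, mul_one]

lemma keylemma (m : ℕ) (lam : ℕ → ℂ) (f : ℕ → ℝ)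
    (hgoal : ∀ n : ℕ, ‖lam n‖ / (n.totient : ℝ) = f n)
    (hlam1 : lam 1 = 1)
    (p : ℕ) (hp : p.Prime)
    (hnorm : ∀ k : ℕ, ‖lam (p ^ k)‖ ≤ ((k : ℝ) + 1) ^ m) :
    (Summable fun k : ℕ => f (p ^ k)) ∧
    (∑' k : ℕ, f (p ^ k)) ≤ 1 + ‖lam p‖ / p +
      (2 ^ (m + 1) + 2 * ∑' k : ℕ, ((k : ℝ) + 3) ^ m * (1/2 : ℝ) ^ k) * (1 / (p : ℝ) ^ 2) := by
  have hp2 : 2 ≤ p := hp.two_le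
  have hpR : (2 : ℝ) ≤ p := by exact_mod_cast hp2
  have hpR0 : (0 : ℝ) < p := by linarith
  have hp1R : (0 : ℝ) < (p : ℝ) - 1 := by linarith
  have hfnn : ∀ n : ℕ, 0 ≤ f n := fun n => by rw [← hgoal]; positivity
  have hf1 : f 1 = 1 := by rw [← hgoal]; simp [hlam1]
  have hphi : ∀ k : ℕ, (((p ^ (k + 1)).totient : ℝ)) = (p : ℝ) ^ k * ((p : ℝ) - 1) := by
    intro k
    rw [Nat.totient_prime_pow hp (Nat.succ_pos k)]
    push_cast [Nat.cast_sub hp.one_le]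
    simp
  have hfval : ∀ k : ℕ, f (p ^ (k + 1)) = ‖lam (p ^ (k + 1))‖ / ((p : ℝ) ^ k * ((p : ℝ) - 1)) := by
    intro k
    rw [← hgoal, hphi]
  have hpowk : ∀ k : ℕ, (2 : ℝ) ^ k ≤ (p : ℝ) ^ k := fun k => pow_le_pow_left₀ (by norm_num) hpR k
  have hnum' : ∀ k : ℕ, ‖lam (p ^ (k + 1))‖ ≤ ((k : ℝ) + 2) ^ m := by
    intro k
    have := hnorm (k + 1)
    push_cast at this
    calc ‖lam (p ^ (k + 1))‖ ≤ ((k : ℝ) + 1 + 1) ^ m := this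
      _ = ((k : ℝ) + 2) ^ m := by ring_nf
  -- summability
  have hfg : ∀ k : ℕ, f (p ^ k) ≤ 2 * ((k : ℝ) + 2) ^ m * (1/2 : ℝ) ^ k := by
    intro k
    cases k with
    | zero =>
      simp only [pow_zero, hf1]
      have h1 : (1 : ℝ) ≤ 2 ^ m := by
        calc (1 : ℝ) = 1 ^ m := (one_pow m).symm
          _ ≤ 2 ^ m := pow_le_pow_left₀ (by norm_num) (by norm_num) m
      push_cast
      norm_num
      linarith
    | succ k =>
      rw [hfval k]
      have hden : (2 : ℝ) ^ k ≤ (p : ℝ) ^ k * ((p : ℝ) - 1) := by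
        calc (2 : ℝ) ^ k ≤ (p : ℝ) ^ k := hpowk k
          _ ≤ (p : ℝ) ^ k * ((p : ℝ) - 1) := le_mul_of_one_le_right (by positivity) (by linarith)
      calc ‖lam (p ^ (k + 1))‖ / ((p : ℝ) ^ k * ((p : ℝ) - 1))
          ≤ ((k : ℝ) + 2) ^ m / (2 : ℝ) ^ k :=
            div_le_div₀ (by positivity) (hnum' k) (by positivity) hden
        _ ≤ ((k : ℝ) + 1 + 2) ^ m / (2 : ℝ) ^ k := by
            gcongr
            linarith
        _ = 2 * (((k + 1 : ℕ) : ℝ) + 2) ^ m * (1/2 : ℝ) ^ (k + 1) := by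
            push_cast
            field_simp
            ring_nf
            rw [← mul_pow]
            norm_num
  have hgsum : Summable fun k : ℕ => 2 * ((k : ℝ) + 2) ^ m * (1/2 : ℝ) ^ k := by
    have := (sumg m 2).mul_left 2
    refine this.congr fun k => ?_
    push_cast
    ring
  have hSf : Summable fun k : ℕ => f (p ^ k) :=
    Summable.of_nonneg_of_le (fun k => hfnn _) hfg hgsum
  refine ⟨hSf, ?_⟩
  -- split off the first two terms
  have hS1 : Summable fun k : ℕ => f (p ^ (k + 1)) := by
    have := (summable_nat_add_iff (f := fun k : ℕ => f (p ^ k)) 1).mpr hSf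
    exact this
  have hS2 : Summable fun k : ℕ => f (p ^ (k + 2)) := by
    have := (summable_nat_add_iff (f := fun k : ℕ => f (p ^ k)) 2).mpr hSf
    exact this
  have h0 : (∑' k : ℕ, f (p ^ k)) = f 1 + ∑' k : ℕ, f (p ^ (k + 1)) := by
    rw [Summable.tsum_eq_zero_add hSf, pow_zero]
  have h1 : (∑' k : ℕ, f (p ^ (k + 1))) = f (p ^ 1) + ∑' k : ℕ, f (p ^ (k + 2)) := by
    rw [Summable.tsum_eq_zero_add hS1]
  -- bound the tail
  have htail : ∀ k : ℕ, f (p ^ (k + 2)) ≤ (2 * ((k : ℝ) + 3) ^ m * (1/2 : ℝ) ^ k) * (1 / (p : ℝ) ^ 2) := by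
    intro k
    rw [hfval (k + 1)]
    have hnum : ‖lam (p ^ (k + 1 + 1))‖ ≤ ((k : ℝ) + 3) ^ m := by
      have := hnum' (k + 1)
      push_cast at this
      calc ‖lam (p ^ (k + 1 + 1))‖ ≤ ((k : ℝ) + 1 + 2) ^ m := this
        _ = ((k : ℝ) + 3) ^ m := by ring_nf
    have hden : (p : ℝ) ^ 2 * 2 ^ k / 2 ≤ (p : ℝ) ^ (k + 1) * ((p : ℝ) - 1) := by
      have h2 : (p : ℝ) ^ 2 * 2 ^ k ≤ (p : ℝ) ^ 2 * (p : ℝ) ^ k :=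
        mul_le_mul_of_nonneg_left (hpowk k) (by positivity)
      have h3 : (p : ℝ) ^ 2 * (p : ℝ) ^ k = (p : ℝ) ^ (k + 1) * (p : ℝ) := by ring
      have h4 : (p : ℝ) / 2 ≤ (p : ℝ) - 1 := by linarith
      have h5 : (0 : ℝ) < (p : ℝ) ^ (k + 1) := by positivity
      calc (p : ℝ) ^ 2 * 2 ^ k / 2 ≤ (p : ℝ) ^ (k + 1) * (p : ℝ) / 2 := by
            rw [← h3]; linarith
        _ = (p : ℝ) ^ (k + 1) * ((p : ℝ) / 2) := by ring
        _ ≤ (p : ℝ) ^ (k + 1) * ((p : ℝ) - 1) := by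
            exact mul_le_mul_of_nonneg_left h4 (le_of_lt h5)
    calc ‖lam (p ^ (k + 1 + 1))‖ / ((p : ℝ) ^ (k + 1) * ((p : ℝ) - 1))
        ≤ ((k : ℝ) + 3) ^ m / ((p : ℝ) ^ 2 * 2 ^ k / 2) :=
          div_le_div₀ (by positivity) hnum (by positivity) hden
      _ = (2 * ((k : ℝ) + 3) ^ m * (1/2 : ℝ) ^ k) * (1 / (p : ℝ) ^ 2) := by
          rw [one_div, inv_pow]
          field_simp
  have htsum3 : Summable fun k : ℕ => (2 * ((k : ℝ) + 3) ^ m * (1/2 : ℝ) ^ k) * (1 / (p : ℝ) ^ 2) := by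
    have h := ((sumg m 3).mul_left 2).mul_right (1 / (p : ℝ) ^ 2)
    refine h.congr fun k => ?_
    push_cast
    ring
  have htailsum : (∑' k : ℕ, f (p ^ (k + 2)))
      ≤ (2 * ∑' k : ℕ, ((k : ℝ) + 3) ^ m * (1/2 : ℝ) ^ k) * (1 / (p : ℝ) ^ 2) := by
    calc (∑' k : ℕ, f (p ^ (k + 2)))
        ≤ ∑' k : ℕ, (2 * ((k : ℝ) + 3) ^ m * (1/2 : ℝ) ^ k) * (1 / (p : ℝ) ^ 2) :=
          Summable.tsum_le_tsum htail hS2 htsum3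
      _ = (2 * ∑' k : ℕ, ((k : ℝ) + 3) ^ m * (1/2 : ℝ) ^ k) * (1 / (p : ℝ) ^ 2) := by
          rw [tsum_mul_right]
          congr 1
          rw [← tsum_mul_left]
          exact tsum_congr fun k => by push_cast; ring
  -- bound f p
  have hfp : f (p ^ 1) ≤ ‖lam p‖ / (p : ℝ) + 2 ^ (m + 1) * (1 / (p : ℝ) ^ 2) := by
    rw [pow_one, ← hgoal p, Nat.totient_prime hp]
    have hc : ((p - 1 : ℕ) : ℝ) = (p : ℝ) - 1 := by
      push_cast [Nat.cast_sub hp.one_le]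
      ring
    rw [hc]
    have ha : (0 : ℝ) ≤ ‖lam p‖ := norm_nonneg _
    have ha2 : ‖lam p‖ ≤ 2 ^ m := by
      have := hnorm 1
      rw [pow_one] at this
      calc ‖lam p‖ ≤ ((1 : ℝ) + 1) ^ m := by push_cast at this; linarith
        _ = 2 ^ m := by norm_num
    have hdiff : ‖lam p‖ / ((p : ℝ) - 1) - ‖lam p‖ / (p : ℝ) = ‖lam p‖ / ((p : ℝ) * ((p : ℝ) - 1)) := by
      field_simp
      ring
    have hb : ‖lam p‖ / ((p : ℝ) * ((p : ℝ) - 1)) ≤ 2 ^ (m + 1) * (1 / (p : ℝ) ^ 2) := by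
      rw [div_le_iff₀ (by positivity)]
      have heq : (2 : ℝ) ^ (m + 1) * (1 / (p : ℝ) ^ 2) * ((p : ℝ) * ((p : ℝ) - 1))
          = 2 ^ m * (2 * ((p : ℝ) - 1) / (p : ℝ)) := by
        field_simp
        ring
      rw [heq]
      have hfrac : (1 : ℝ) ≤ 2 * ((p : ℝ) - 1) / (p : ℝ) := by
        rw [le_div_iff₀ hpR0]
        linarith
      have h2m : (0 : ℝ) < 2 ^ m := by positivity
      nlinarith
    linarith
  have hf1' : f (p ^ 0) = 1 := by rw [pow_zero, hf1]
  rw [h0, h1, hf1]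
  have hrhs : (2 ^ (m + 1) + 2 * ∑' k : ℕ, ((k : ℝ) + 3) ^ m * (1/2 : ℝ) ^ k) * (1 / (p : ℝ) ^ 2)
      = 2 ^ (m + 1) * (1 / (p : ℝ) ^ 2)
        + (2 * ∑' k : ℕ, ((k : ℝ) + 3) ^ m * (1/2 : ℝ) ^ k) * (1 / (p : ℝ) ^ 2) := by ring
  rw [hrhs]
  linarith

set_option maxHeartbeats 1000000 in
/-- For a multiplicative function `λ` bounded by `τ_m`, the sum of `|λ(a)|/φ(a)` over all
`z`-smooth positive integers `a` converges and is `≪ Π_{p ≤ z} (1 + |λ(p)|/p)`. -/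
theorem stmt7 (m : ℕ) (hm : 1 ≤ m) :
    ∃ C > (0 : ℝ), ∀ lam : ℕ → ℂ,
      lam 1 = 1 →
      (∀ a b : ℕ, 1 ≤ a → 1 ≤ b → Nat.Coprime a b → lam (a * b) = lam a * lam b) →
      (∀ n : ℕ, 1 ≤ n → ‖lam n‖ ≤ tauM m n) →
      ∀ z : ℝ, 2 ≤ z →
      Summable (fun a : {a : ℕ // 1 ≤ a ∧ ∀ p : ℕ, p.Prime → p ∣ a → (p : ℝ) ≤ z} =>
        ‖lam (a : ℕ)‖ / ((a : ℕ).totient : ℝ)) ∧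
      (∑' a : {a : ℕ // 1 ≤ a ∧ ∀ p : ℕ, p.Prime → p ∣ a → (p : ℝ) ≤ z},
          ‖lam (a : ℕ)‖ / ((a : ℕ).totient : ℝ))
        ≤ C * ∏ p ∈ (Finset.Icc 2 ⌊z⌋₊).filter Nat.Prime, (1 + ‖lam p‖ / p) := by
  -- constants
  set D : ℝ := ∑' k : ℕ, ((k : ℝ) + 3) ^ m * (1/2 : ℝ) ^ k with hD
  have hDsum : Summable fun k : ℕ => ((k : ℝ) + 3) ^ m * (1/2 : ℝ) ^ k := (sumg m 3).congr fun k => by norm_num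
  have hDnn : 0 ≤ D := tsum_nonneg fun k => by positivity
  set E : ℝ := 2 ^ (m + 1) + 2 * D with hE
  have hEnn : 0 ≤ E := by positivity
  set K : ℝ := ∑' n : ℕ, 1 / (n : ℝ) ^ 2 with hK
  have hKsum : Summable fun n : ℕ => 1 / (n : ℝ) ^ 2 := Real.summable_one_div_nat_pow.mpr one_lt_two
  have hKnn : 0 ≤ K := tsum_nonneg fun k => by positivity
  refine ⟨Real.exp (E * K), Real.exp_pos _, ?_⟩
  intro lam hlam1 hlammul hlamb z hz
  set f : ℕ → ℝ := fun n => ‖lam n‖ / (n.totient : ℝ) with hf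
  clear_value f
  have hgoal : ∀ n : ℕ, ‖lam n‖ / (n.totient : ℝ) = f n := fun n => by rw [hf]
  have hfnn : ∀ n, 0 ≤ f n := fun n => by rw [← hgoal]; positivity
  have hf1 : f 1 = 1 := by simp [hf, hlam1]
  have hfmul : ∀ {a b : ℕ}, Nat.Coprime a b → f (a * b) = f a * f b := by
    intro a b hab
    rcases Nat.eq_zero_or_pos a with rfl | ha
    · have hb : b = 1 := by simpa using hab
      subst hb; simp [hf]
    rcases Nat.eq_zero_or_pos b with rfl | hb
    · have ha' : a = 1 := by simpa [Nat.coprime_zero_right] using hab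
      subst ha'; simp [hf]
    · simp only [hf, hlammul a b ha hb hab, norm_mul, Nat.totient_mul hab, Nat.cast_mul]
      rw [div_mul_div_comm]
  -- bound at prime powers
  have hnormpk : ∀ p k : ℕ, p.Prime → ‖lam (p ^ k)‖ ≤ ((k : ℝ) + 1) ^ m := by
    intro p k hp
    have h1 := hlamb (p ^ k) (Nat.one_le_iff_ne_zero.mpr (pow_ne_zero k hp.pos.ne'))
    have h2 := tauM_prime_pow_le m k p hp
    calc ‖lam (p ^ k)‖ ≤ (tauM m (p ^ k) : ℝ) := h1
      _ ≤ (((k + 1) ^ m : ℕ) : ℝ) := by exact_mod_cast h2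
      _ = ((k : ℝ) + 1) ^ m := by push_cast; ring
  -- the key local estimate
  have key : ∀ p : ℕ, p.Prime →
      (Summable fun k : ℕ => f (p ^ k)) ∧
      (∑' k : ℕ, f (p ^ k)) ≤ 1 + ‖lam p‖ / p + E * (1 / (p : ℝ) ^ 2) := by
    intro p hp
    have h := keylemma m lam f (fun n => hgoal n) hlam1 p hp (fun k => hnormpk p k hp)
    rw [hE, hD]
    exact h
  -- Euler product
  set N : ℕ := ⌊z⌋₊ + 1 with hN
  have hsumnorm : ∀ {p : ℕ}, p.Prime → Summable fun n : ℕ => ‖f (p ^ n)‖ := by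
    intro p hp
    have := (key p hp).1
    simpa [Real.norm_of_nonneg (hfnn _)] using this
  obtain ⟨hS, hHS⟩ :=
    EulerProduct.summable_and_hasSum_smoothNumbers_prod_primesBelow_tsum hf1 hfmul hsumnorm N
  -- equivalence of index types
  have hiff : ∀ a : ℕ, (1 ≤ a ∧ ∀ p : ℕ, p.Prime → p ∣ a → (p : ℝ) ≤ z)
      ↔ a ∈ N.smoothNumbers := by
    intro a
    rw [Nat.mem_smoothNumbers']
    constructor
    · rintro ⟨-, h⟩ p hp hpa
      have := h p hp hpa
      have : p ≤ ⌊z⌋₊ := Nat.le_floor this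
      omega
    · intro h
      constructor
      · by_contra hc
        push_neg at hc
        interval_cases a
        obtain ⟨p, hpN, hp⟩ := Nat.exists_infinite_primes N
        exact absurd (h p hp (dvd_zero p)) (by omega)
      · intro p hp hpa
        have := h p hp hpa
        have hple : p ≤ ⌊z⌋₊ := by omega
        calc (p : ℝ) ≤ (⌊z⌋₊ : ℝ) := by exact_mod_cast hple
          _ ≤ z := Nat.floor_le (by linarith)
  have hsummain : Summable (fun a : {a : ℕ // 1 ≤ a ∧ ∀ p : ℕ, p.Prime → p ∣ a → (p : ℝ) ≤ z} =>
      f (a : ℕ)) := by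
    have : Summable fun a : N.smoothNumbers => f (a : ℕ) := by
      refine hS.congr fun a => ?_
      exact Real.norm_of_nonneg (hfnn _)
    exact this.comp_injective (Equiv.subtypeEquivRight hiff).injective
  refine ⟨hsummain.congr fun a => (hgoal (a : ℕ)).symm, ?_⟩
  have htsum_eq : (∑' a : {a : ℕ // 1 ≤ a ∧ ∀ p : ℕ, p.Prime → p ∣ a → (p : ℝ) ≤ z},
      f (a : ℕ)) = ∏ p ∈ N.primesBelow, ∑' n : ℕ, f (p ^ n) := by
    rw [← hHS.tsum_eq]
    exact (Equiv.subtypeEquivRight hiff).tsum_eq (fun a : N.smoothNumbers => f (a : ℕ))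
  -- finset equality
  have hfins : (Finset.Icc 2 ⌊z⌋₊).filter Nat.Prime = N.primesBelow := by
    ext p
    simp only [Finset.mem_filter, Finset.mem_Icc, Nat.primesBelow, Finset.mem_range]
    constructor
    · rintro ⟨⟨h2, hle⟩, hp⟩; exact ⟨by omega, hp⟩
    · rintro ⟨hlt, hp⟩; exact ⟨⟨hp.two_le, by omega⟩, hp⟩
  have hts2 : (∑' a : {a : ℕ // 1 ≤ a ∧ ∀ p : ℕ, p.Prime → p ∣ a → (p : ℝ) ≤ z},
      ‖lam (a : ℕ)‖ / (((a : ℕ).totient : ℝ))) = ∑' a : {a : ℕ // 1 ≤ a ∧ ∀ p : ℕ, p.Prime → p ∣ a → (p : ℝ) ≤ z},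
      f (a : ℕ) := tsum_congr fun a => hgoal (a : ℕ)
  rw [hts2, htsum_eq, hfins]
  -- product estimate
  calc (∏ p ∈ N.primesBelow, ∑' n : ℕ, f (p ^ n))
      ≤ ∏ p ∈ N.primesBelow, (1 + ‖lam p‖ / (p : ℝ)) * (1 + E * (1 / (p : ℝ) ^ 2)) := by
        refine Finset.prod_le_prod (fun p _ => tsum_nonneg fun k => hfnn _) fun p hp => ?_
        have hpp := Nat.prime_of_mem_primesBelow hp
        have h1 := (key p hpp).2
        have ha : 0 ≤ ‖lam p‖ / (p : ℝ) := by positivity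
        have hb : 0 ≤ E * (1 / (p : ℝ) ^ 2) := by positivity
        nlinarith [mul_nonneg ha hb]
    _ = (∏ p ∈ N.primesBelow, (1 + ‖lam p‖ / (p : ℝ)))
        * ∏ p ∈ N.primesBelow, (1 + E * (1 / (p : ℝ) ^ 2)) := Finset.prod_mul_distrib
    _ ≤ Real.exp (E * K) * ∏ p ∈ N.primesBelow, (1 + ‖lam p‖ / (p : ℝ)) := by
        rw [mul_comm]
        refine mul_le_mul_of_nonneg_right ?_
          (Finset.prod_nonneg fun p _ => by positivity)
        calc (∏ p ∈ N.primesBelow, (1 + E * (1 / (p : ℝ) ^ 2)))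
            ≤ ∏ p ∈ N.primesBelow, Real.exp (E * (1 / (p : ℝ) ^ 2)) :=
              Finset.prod_le_prod (fun p _ => by positivity)
                (fun p _ => by
                  rw [add_comm]
                  exact Real.add_one_le_exp _)
          _ = Real.exp (∑ p ∈ N.primesBelow, E * (1 / (p : ℝ) ^ 2)) :=
              (Real.exp_sum _ _).symm
          _ ≤ Real.exp (E * K) := by
              refine Real.exp_le_exp.mpr ?_
              rw [← Finset.mul_sum]
              refine mul_le_mul_of_nonneg_left ?_ hEnn
              exact Summable.sum_le_tsum _ (fun n _ => by positivity) hKsum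
end

section
/- For every integer A ≥ 0 and every real ε > 0 there is a constant C > 0 such that for all real t and all real w > 0: the improper integral I(t, w) := lim_{R → ∞} ∫₀^R (v² + 1)^{-(1/2 + it)} cos(v w) dv exists, and |I(t, w)| ≤ C · ((1 + |t|)/w)^A · (1 + (1 + |t|)/w)^ε. -/
open Complex MeasureTheory Filter Set intervalIntegral

noncomputable section
namespace Stmt9aux

abbrev Tri := ℂ × ℕ × ℕ

/-- term c * v^m * (v²+1)^{-(s+j)} written with exp/log -/
def tm (s : ℂ) (p : Tri) (v : ℝ) : ℂ :=
  p.1 * (v : ℂ) ^ p.2.1 * Complex.exp (-(s + p.2.2) * (Real.log (v ^ 2 + 1) : ℂ))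

def SL (s : ℂ) (L : List Tri) (v : ℝ) : ℂ := (L.map fun p => tm s p v).sum

def dT (s : ℂ) (p : Tri) : List Tri :=
  [(p.1 * p.2.1, p.2.1 - 1, p.2.2), (-2 * p.1 * (s + p.2.2), p.2.1 + 1, p.2.2 + 1)]

def dL (s : ℂ) : List Tri → List Tri
  | [] => []
  | p :: L => dT s p ++ dL s L

def Lk (s : ℂ) (k : ℕ) : List Tri := (dL s)^[k] [(1, 0, 0)]

lemma one_le_sq_add_one (v : ℝ) : (1 : ℝ) ≤ v ^ 2 + 1 := by nlinarith [sq_nonneg v]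

lemma sq_add_one_pos (v : ℝ) : (0 : ℝ) < v ^ 2 + 1 := by nlinarith [sq_nonneg v]

lemma continuous_tm (s : ℂ) (p : Tri) : Continuous (tm s p) := by
  apply Continuous.mul
  · exact continuous_const.mul (Complex.continuous_ofReal.pow _)
  · apply Complex.continuous_exp.comp
    apply Continuous.mul continuous_const
    apply Complex.continuous_ofReal.comp
    exact Continuous.log (by fun_prop) (fun v => (sq_add_one_pos v).ne')

lemma continuous_SL (s : ℂ) (L : List Tri) : Continuous (SL s L) := by
  induction L with
  | nil => exact continuous_const
  | cons p L ih =>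
      have : SL s (p :: L) = fun v => tm s p v + SL s L v := by
        funext v; simp [SL]
      rw [this]; exact (continuous_tm s p).add ih

lemma SL_append (s : ℂ) (L1 L2 : List Tri) (v : ℝ) :
    SL s (L1 ++ L2) v = SL s L1 v + SL s L2 v := by
  simp [SL]

lemma hasDerivAt_tm (s : ℂ) (p : Tri) (v : ℝ) :
    HasDerivAt (tm s p) (SL s (dT s p) v) v := by
  obtain ⟨c, m, j⟩ := p
  have hpos := sq_add_one_pos v
  have hlog : HasDerivAt (fun v : ℝ => Real.log (v ^ 2 + 1)) (2 * v / (v ^ 2 + 1)) v := by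
    have h1 : HasDerivAt (fun v : ℝ => v ^ 2 + 1) (2 * v) v := by
      simpa using ((hasDerivAt_pow 2 v).add_const 1)
    have := (Real.hasDerivAt_log hpos.ne').comp v h1
    simpa [Function.comp_def, div_eq_inv_mul, mul_comm] using this
  have hexp : HasDerivAt (fun v : ℝ => Complex.exp (-(s + j) * (Real.log (v ^ 2 + 1) : ℂ)))
      (Complex.exp (-(s + j) * (Real.log (v ^ 2 + 1) : ℂ)) * (-(s + j) * (2 * v / (v ^ 2 + 1) : ℝ))) v := by
    exact ((hlog.ofReal_comp.const_mul (-(s + j))).cexp)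
  have hpow : HasDerivAt (fun v : ℝ => (v : ℂ) ^ m) (m * (v : ℂ) ^ (m - 1)) v := by
    simpa using (hasDerivAt_pow m (v : ℂ)).comp_ofReal
  have h := ((hpow.const_mul c).mul hexp)
  refine h.congr_deriv ?_; symm
  show tm s (c * m, m - 1, j) v + (tm s (-2 * c * (s + j), m + 1, j + 1) v + 0) = _
  have key : Complex.exp (-(s + (j + 1 : ℕ)) * (Real.log (v ^ 2 + 1) : ℂ)) * (v ^ 2 + 1 : ℝ)
      = Complex.exp (-(s + j) * (Real.log (v ^ 2 + 1) : ℂ)) := by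
    rw [show ((v ^ 2 + 1 : ℝ) : ℂ) = Complex.exp ((Real.log (v ^ 2 + 1) : ℝ) : ℂ) by
      rw [← Complex.ofReal_exp, Real.exp_log hpos], ← Complex.exp_add]
    congr 1
    push_cast
    ring
  rw [add_zero]
  unfold tm
  simp only
  have hne : ((v ^ 2 + 1 : ℝ) : ℂ) ≠ 0 := by
    exact_mod_cast Complex.ofReal_ne_zero.mpr hpos.ne'
  have hcast : ((2 * v / (v ^ 2 + 1) : ℝ) : ℂ) = 2 * (v : ℂ) / ((v ^ 2 + 1 : ℝ) : ℂ) := by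
    push_cast; ring
  rw [hcast, ← key]
  set E := Complex.exp (-(s + ((j + 1 : ℕ) : ℂ)) * (Real.log (v ^ 2 + 1) : ℂ)) with hE
  set u := ((v ^ 2 + 1 : ℝ) : ℂ) with hu
  field_simp
  push_cast
  ring

lemma hasDerivAt_SL (s : ℂ) (L : List Tri) (v : ℝ) :
    HasDerivAt (SL s L) (SL s (dL s L) v) v := by
  induction L with
  | nil => exact hasDerivAt_const v (0 : ℂ)
  | cons p L ih =>
      have h1 : SL s (p :: L) = fun v => tm s p v + SL s L v := by funext v; simp [SL]
      rw [h1, show SL s (dL s (p :: L)) v = SL s (dT s p) v + SL s (dL s L) v by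
        rw [show dL s (p :: L) = dT s p ++ dL s L from rfl, SL_append]]
      exact (hasDerivAt_tm s p v).add ih


def csum (L : List Tri) : ℝ := (L.map fun p => ‖p.1‖).sum

lemma csum_nonneg (L : List Tri) : 0 ≤ csum L := by
  apply List.sum_nonneg; intro x hx
  simp only [List.mem_map] at hx
  obtain ⟨p, _, rfl⟩ := hx; exact norm_nonneg _

lemma csum_append (L1 L2 : List Tri) : csum (L1 ++ L2) = csum L1 + csum L2 := by
  simp [csum]

lemma mem_dL {s : ℂ} {p : Tri} {L : List Tri} :
    p ∈ dL s L ↔ ∃ q ∈ L, p ∈ dT s q := by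
  induction L with
  | nil => simp [dL]
  | cons q L ih => simp [dL, List.mem_append, ih]

/-- structural invariant carried through differentiation -/
def good (T : ℝ) (k : ℕ) (L : List Tri) : Prop :=
  csum L ≤ (4 * (k + 1)) ^ k * T ^ k ∧
    ∀ p ∈ L, (p.2.1 + k ≤ 2 * p.2.2 ∧ p.2.2 ≤ k) ∨ p.1 = 0

lemma csum_dT_le {s : ℂ} {T : ℝ} (hT : 1 ≤ T) (hs : ‖s‖ ≤ T) {k : ℕ} {p : Tri}
    (h12 : (p.2.1 + k ≤ 2 * p.2.2 ∧ p.2.2 ≤ k) ∨ p.1 = 0) :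
    csum (dT s p) ≤ (4 * (k + 1) * T) * ‖p.1‖ := by
  obtain ⟨c, m, j⟩ := p
  rcases h12 with ⟨h1, h2⟩ | h0
  swap
  · simp only at h0
    subst h0
    have : csum (dT s (0, m, j)) = 0 := by simp [csum, dT]
    rw [this]
    simp
  simp only at h1 h2
  have hm : (m : ℝ) ≤ k := by
    have : m ≤ k := by omega
    exact_mod_cast this
  have hsj : ‖s + (j : ℂ)‖ ≤ T + k := by
    calc ‖s + (j : ℂ)‖ ≤ ‖s‖ + ‖(j : ℂ)‖ := norm_add_le _ _
    _ ≤ T + k := by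
        apply add_le_add hs
        simp only [Complex.norm_natCast]
        exact_mod_cast h2
  have : csum (dT s (c, m, j)) = ‖c * m‖ + (‖-2 * c * (s + j)‖ + 0) := by
    simp [csum, dT]
  rw [this, add_zero]
  have e1 : ‖c * (m : ℂ)‖ = ‖c‖ * m := by
    rw [norm_mul, Complex.norm_natCast]
  have e2 : ‖(-2 : ℂ) * c * (s + j)‖ = 2 * ‖c‖ * ‖s + (j : ℂ)‖ := by
    rw [norm_mul, norm_mul]; simp
  rw [e1, e2]
  simp only
  have hc : (0 : ℝ) ≤ ‖c‖ := norm_nonneg _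
  have hk : (0 : ℝ) ≤ (k : ℝ) := Nat.cast_nonneg _
  have hb1 : 2 * ‖c‖ * ‖s + (j : ℂ)‖ ≤ 2 * ‖c‖ * (T + k) :=
    mul_le_mul_of_nonneg_left hsj (by positivity)
  have hb2 : ‖c‖ * (m : ℝ) ≤ ‖c‖ * k := mul_le_mul_of_nonneg_left hm hc
  nlinarith [mul_le_mul_of_nonneg_left hT (mul_nonneg hc hk)]

lemma good_step {s : ℂ} {T : ℝ} (hT : 1 ≤ T) (hs : ‖s‖ ≤ T) {k : ℕ} {L : List Tri}
    (h : good T k L) : good T (k + 1) (dL s L) := by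
  obtain ⟨h1, h2⟩ := h
  constructor
  · push_cast
    have key : csum (dL s L) ≤ (4 * (k + 1) * T) * csum L := by
      clear h1
      induction L with
      | nil => simp [dL, csum]
      | cons p L ih =>
          have hp := h2 p (List.mem_cons_self)
          have hL : ∀ q ∈ L, (q.2.1 + k ≤ 2 * q.2.2 ∧ q.2.2 ≤ k) ∨ q.1 = 0 := fun q hq =>
            h2 q (List.mem_cons_of_mem _ hq)
          have : dL s (p :: L) = dT s p ++ dL s L := rfl
          rw [this, csum_append, show csum (p :: L) = ‖p.1‖ + csum L by simp [csum]]
          have := csum_dT_le hT hs hp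
          have := ih hL
          nlinarith [this]
    calc csum (dL s L) ≤ (4 * (k + 1) * T) * csum L := key
      _ ≤ (4 * (k + 1) * T) * ((4 * (k + 1)) ^ k * T ^ k) := by
          apply mul_le_mul_of_nonneg_left h1
          positivity
      _ ≤ (4 * ((k : ℝ) + 1 + 1)) ^ (k + 1) * T ^ (k + 1) := by
          have e : (4 * ((k : ℝ) + 1) * T) * ((4 * ((k : ℝ) + 1)) ^ k * T ^ k)
              = (4 * ((k : ℝ) + 1)) ^ (k + 1) * T ^ (k + 1) := by ring
          rw [e]
          apply mul_le_mul_of_nonneg_right _ (by positivity)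
          apply pow_le_pow_left₀ (by positivity)
          linarith
  · intro p hp
    rw [mem_dL] at hp
    obtain ⟨q, hq, hpq⟩ := hp
    simp only [dT, List.mem_cons, List.mem_singleton] at hpq
    rcases h2 q hq with ⟨hq1, hq2⟩ | hq0
    · rcases hpq with rfl | hpq
      · rcases Nat.eq_zero_or_pos q.2.1 with hm0 | hm0
        · right; dsimp only; rw [hm0]; simp
        · left; refine ⟨?_, ?_⟩ <;> dsimp only <;> omega
      · simp only [List.mem_singleton, List.not_mem_nil, or_false] at hpq
        subst hpq
        left; refine ⟨?_, ?_⟩ <;> dsimp only <;> omega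
    · rcases hpq with rfl | hpq
      · right; dsimp only; rw [hq0]; ring
      · simp only [List.mem_singleton, List.not_mem_nil, or_false] at hpq
        subst hpq
        right; dsimp only; rw [hq0]; ring

lemma good_Lk {s : ℂ} {T : ℝ} (hT : 1 ≤ T) (hs : ‖s‖ ≤ T) (k : ℕ) :
    good T k (Lk s k) := by
  induction k with
  | zero =>
      constructor
      · simp [Lk, csum]
      · intro p hp; simp [Lk] at hp; subst hp; left; simp
  | succ k ih =>
      rw [Lk, Function.iterate_succ_apply']
      exact good_step hT hs ih

lemma norm_tm_le {s : ℂ} (hsre : s.re = 1 / 2) {k : ℕ} {p : Tri}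
    (hmj : p.2.1 + k ≤ 2 * p.2.2 ∨ p.1 = 0) (v : ℝ) :
    ‖tm s p v‖ ≤ ‖p.1‖ * (v ^ 2 + 1) ^ (-((1 + (k : ℝ)) / 2)) := by
  obtain ⟨c, m, j⟩ := p
  rcases hmj with hmj | h0
  swap
  · simp only at h0
    subst h0
    have : tm s (0, m, j) v = 0 := by simp [tm]
    rw [this]; simp
  simp only at hmj
  have hpos := sq_add_one_pos v
  have hlog : 0 ≤ Real.log (v ^ 2 + 1) := Real.log_nonneg (one_le_sq_add_one v)
  have e1 : ‖tm s (c, m, j) v‖ = ‖c‖ * |v| ^ m * (v ^ 2 + 1) ^ (-(1 / 2 + (j : ℝ))) := by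
    unfold tm
    rw [norm_mul, norm_mul]
    congr 1
    · congr 1
      rw [norm_pow, Complex.norm_real, Real.norm_eq_abs]
    · rw [Complex.norm_exp]
      rw [Real.rpow_def_of_pos hpos]
      congr 1
      have : (-(s + (j : ℂ)) * ((Real.log (v ^ 2 + 1) : ℝ) : ℂ)).re
          = -(s.re + j) * Real.log (v ^ 2 + 1) := by
        simp [Complex.add_re, Complex.mul_re, Complex.ofReal_re, Complex.ofReal_im]
      rw [this, hsre]
      ring
  rw [e1]
  have hv : |v| ^ m ≤ (v ^ 2 + 1) ^ ((m : ℝ) / 2) := by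
    have h1 : |v| ≤ (v ^ 2 + 1) ^ ((1 : ℝ) / 2) := by
      rw [← Real.sqrt_eq_rpow, ← Real.sqrt_sq_eq_abs]
      exact Real.sqrt_le_sqrt (by linarith)
    calc |v| ^ m ≤ ((v ^ 2 + 1) ^ ((1 : ℝ) / 2)) ^ m :=
          pow_le_pow_left₀ (abs_nonneg v) h1 m
      _ = (v ^ 2 + 1) ^ ((m : ℝ) / 2) := by
          rw [← Real.rpow_natCast ((v ^ 2 + 1) ^ ((1 : ℝ) / 2)) m, ← Real.rpow_mul hpos.le]
          congr 1; ring
  calc ‖c‖ * |v| ^ m * (v ^ 2 + 1) ^ (-(1 / 2 + (j : ℝ)))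
      ≤ ‖c‖ * (v ^ 2 + 1) ^ ((m : ℝ) / 2) * (v ^ 2 + 1) ^ (-(1 / 2 + (j : ℝ))) := by
        apply mul_le_mul_of_nonneg_right _ (Real.rpow_nonneg hpos.le _)
        exact mul_le_mul_of_nonneg_left hv (norm_nonneg _)
    _ = ‖c‖ * (v ^ 2 + 1) ^ ((m : ℝ) / 2 + -(1 / 2 + (j : ℝ))) := by
        rw [mul_assoc, ← Real.rpow_add hpos]
    _ ≤ ‖c‖ * (v ^ 2 + 1) ^ (-((1 + (k : ℝ)) / 2)) := by
        apply mul_le_mul_of_nonneg_left _ (norm_nonneg _)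
        apply Real.rpow_le_rpow_of_exponent_le (one_le_sq_add_one v)
        have hmj' : (m : ℝ) + k ≤ 2 * j := by exact_mod_cast hmj
        linarith

lemma norm_SL_le {s : ℂ} (hsre : s.re = 1 / 2) {k : ℕ} {L : List Tri}
    (hL : ∀ p ∈ L, p.2.1 + k ≤ 2 * p.2.2 ∨ p.1 = 0) (v : ℝ) :
    ‖SL s L v‖ ≤ csum L * (v ^ 2 + 1) ^ (-((1 + (k : ℝ)) / 2)) := by
  induction L with
  | nil => simp [SL, csum]
  | cons p L ih =>
      have h1 : ‖SL s (p :: L) v‖ ≤ ‖tm s p v‖ + ‖SL s L v‖ := by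
        rw [show SL s (p :: L) v = tm s p v + SL s L v by simp [SL]]
        exact norm_add_le _ _
      have h2 := norm_tm_le hsre (hL p (List.mem_cons_self)) v
      have h3 := ih (fun q hq => hL q (List.mem_cons_of_mem _ hq))
      rw [show csum (p :: L) = ‖p.1‖ + csum L by simp [csum], add_mul]
      linarith


section Main

variable {s : ℂ} {T w : ℝ}

/-- the integrand at level `k` -/
def g (s : ℂ) (w : ℝ) (k : ℕ) (v : ℝ) : ℂ :=
  SL s (Lk s k) v * Complex.exp (Complex.I * v * w)

def Ck (T : ℝ) (k : ℕ) : ℝ := (4 * (k + 1)) ^ k * T ^ k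

lemma Ck_pos (hT : 1 ≤ T) (k : ℕ) : 0 < Ck T k := by
  have : (0:ℝ) < T := by linarith
  unfold Ck; positivity

lemma norm_exp_I_mul (v w : ℝ) : ‖Complex.exp (Complex.I * v * w)‖ = 1 := by
  rw [Complex.norm_exp]
  simp [Complex.mul_re]

lemma norm_g_le (hsre : s.re = 1 / 2) (hT : 1 ≤ T) (hs : ‖s‖ ≤ T) (k : ℕ) (v : ℝ) :
    ‖g s w k v‖ ≤ Ck T k * (v ^ 2 + 1) ^ (-((1 + (k : ℝ)) / 2)) := by
  obtain ⟨h1, h2⟩ := good_Lk hT hs (s := s) k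
  have hb := norm_SL_le hsre (fun p hp => (h2 p hp).imp And.left id) v
  calc ‖g s w k v‖ = ‖SL s (Lk s k) v‖ := by
        rw [g, norm_mul, norm_exp_I_mul, mul_one]
    _ ≤ csum (Lk s k) * (v ^ 2 + 1) ^ (-((1 + (k : ℝ)) / 2)) := hb
    _ ≤ Ck T k * (v ^ 2 + 1) ^ (-((1 + (k : ℝ)) / 2)) :=
        mul_le_mul_of_nonneg_right h1 (Real.rpow_nonneg (sq_add_one_pos v).le _)

lemma rpow_le_inv_sq (k : ℕ) (hk : 1 ≤ k) (v : ℝ) :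
    (v ^ 2 + 1) ^ (-((1 + (k : ℝ)) / 2)) ≤ (1 + v ^ 2)⁻¹ := by
  have hpos := sq_add_one_pos v
  have h1 : (v ^ 2 + 1) ^ (-((1 + (k : ℝ)) / 2)) ≤ (v ^ 2 + 1) ^ (-1 : ℝ) := by
    apply Real.rpow_le_rpow_of_exponent_le (one_le_sq_add_one v)
    have : (1:ℝ) ≤ k := by exact_mod_cast hk
    linarith
  calc (v ^ 2 + 1) ^ (-((1 + (k : ℝ)) / 2)) ≤ (v ^ 2 + 1) ^ (-1 : ℝ) := h1
    _ = (1 + v ^ 2)⁻¹ := by rw [Real.rpow_neg_one, add_comm]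

lemma norm_g_le_inv_sq (hsre : s.re = 1 / 2) (hT : 1 ≤ T) (hs : ‖s‖ ≤ T) {k : ℕ}
    (hk : 1 ≤ k) (v : ℝ) : ‖g s w k v‖ ≤ Ck T k * (1 + v ^ 2)⁻¹ := by
  calc ‖g s w k v‖ ≤ Ck T k * (v ^ 2 + 1) ^ (-((1 + (k : ℝ)) / 2)) :=
        norm_g_le hsre hT hs k v
    _ ≤ Ck T k * (1 + v ^ 2)⁻¹ :=
        mul_le_mul_of_nonneg_left (rpow_le_inv_sq k hk v) (Ck_pos hT k).le

lemma continuous_g (s : ℂ) (w : ℝ) (k : ℕ) : Continuous (g s w k) := by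
  apply (continuous_SL s (Lk s k)).mul
  apply Complex.continuous_exp.comp
  fun_prop

lemma integrable_g (hsre : s.re = 1 / 2) (hT : 1 ≤ T) (hs : ‖s‖ ≤ T) {k : ℕ}
    (hk : 1 ≤ k) : MeasureTheory.Integrable (g s w k) := by
  apply MeasureTheory.Integrable.mono'
    (integrable_inv_one_add_sq.const_mul (Ck T k))
    (continuous_g s w k).aestronglyMeasurable
  exact Filter.Eventually.of_forall (norm_g_le_inv_sq hsre hT hs hk)

/-- the full-line integral at level `k ≥ 1` -/
def G (s : ℂ) (w : ℝ) (k : ℕ) : ℂ := ∫ v : ℝ, g s w k v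

lemma norm_G_le (hsre : s.re = 1 / 2) (hT : 1 ≤ T) (hs : ‖s‖ ≤ T) {k : ℕ}
    (hk : 1 ≤ k) : ‖G s w k‖ ≤ Ck T k * Real.pi := by
  have h := MeasureTheory.norm_integral_le_of_norm_le
    (integrable_inv_one_add_sq.const_mul (Ck T k))
    (Filter.Eventually.of_forall (norm_g_le_inv_sq (w := w) hsre hT hs hk))
  calc ‖G s w k‖ ≤ ∫ v : ℝ, Ck T k * (1 + v ^ 2)⁻¹ := h
    _ = Ck T k * Real.pi := by
        rw [MeasureTheory.integral_const_mul, integral_univ_inv_one_add_sq]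

lemma hasDerivAt_expIw (hw : w ≠ 0) (x : ℝ) :
    HasDerivAt (fun x : ℝ => Complex.exp (Complex.I * x * w) / (Complex.I * w))
      (Complex.exp (Complex.I * x * w)) x := by
  have hIw : Complex.I * w ≠ 0 := by
    simp [Complex.I_ne_zero, Complex.ofReal_ne_zero, hw]
  have h1 : HasDerivAt (fun x : ℝ => Complex.I * (x : ℂ) * (w : ℂ)) (Complex.I * w) x := by
    have := ((hasDerivAt_id x).ofReal_comp.const_mul Complex.I).mul_const (w : ℂ)
    simpa using this
  have h2 := h1.cexp
  have h3 := h2.div_const (Complex.I * w)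
  refine h3.congr_deriv ?_
  rw [mul_div_assoc, div_self hIw, mul_one]

lemma ibp (s : ℂ) (hw : w ≠ 0) (k : ℕ) (R : ℝ) :
    ∫ v in (-R)..R, g s w k v
      = (SL s (Lk s k) R * Complex.exp (Complex.I * R * w)
          - SL s (Lk s k) (-R) * Complex.exp (Complex.I * ((-R : ℝ) : ℂ) * w)) / (Complex.I * w)
        - (Complex.I * w)⁻¹ * ∫ v in (-R)..R, g s w (k + 1) v := by
  have hIw : Complex.I * (w : ℂ) ≠ 0 := by
    simp [Complex.I_ne_zero, Complex.ofReal_ne_zero, hw]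
  have hu : ∀ x ∈ Set.uIcc (-R) R, HasDerivAt (SL s (Lk s k)) (SL s (Lk s (k + 1)) x) x := by
    intro x _
    have := hasDerivAt_SL s (Lk s k) x
    rwa [show dL s (Lk s k) = Lk s (k + 1) from (Function.iterate_succ_apply' (dL s) k _).symm] at this
  have hv : ∀ x ∈ Set.uIcc (-R) R,
      HasDerivAt (fun x : ℝ => Complex.exp (Complex.I * x * w) / (Complex.I * w))
        (Complex.exp (Complex.I * x * w)) x := fun x _ => hasDerivAt_expIw hw x
  have hu' : IntervalIntegrable (SL s (Lk s (k + 1))) MeasureTheory.volume (-R) R :=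
    (continuous_SL s (Lk s (k + 1))).intervalIntegrable _ _
  have hv' : IntervalIntegrable (fun x : ℝ => Complex.exp (Complex.I * x * w))
      MeasureTheory.volume (-R) R := by
    apply Continuous.intervalIntegrable
    apply Complex.continuous_exp.comp; fun_prop
  have H := intervalIntegral.integral_mul_deriv_eq_deriv_mul hu hv hu' hv'
  rw [show (∫ v in (-R)..R, g s w k v)
      = ∫ x in (-R)..R, SL s (Lk s k) x * Complex.exp (Complex.I * x * w) from rfl, H]
  have : (∫ x in (-R)..R, SL s (Lk s (k + 1)) x
        * (Complex.exp (Complex.I * x * w) / (Complex.I * w)))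
      = (Complex.I * w)⁻¹ * ∫ v in (-R)..R, g s w (k + 1) v := by
    rw [← intervalIntegral.integral_const_mul]
    congr 1; funext x
    rw [g]; ring
  rw [this]
  ring

lemma tendsto_boundary (hsre : s.re = 1 / 2) (hT : 1 ≤ T) (hs : ‖s‖ ≤ T) (k : ℕ) :
    Filter.Tendsto (fun R : ℝ => SL s (Lk s k) R * Complex.exp (Complex.I * R * w)
      - SL s (Lk s k) (-R) * Complex.exp (Complex.I * ((-R : ℝ) : ℂ) * w)) Filter.atTop (nhds 0) := by
  have key : ∀ v : ℝ, ‖SL s (Lk s k) v‖ ≤ Ck T k * (v ^ 2 + 1) ^ (-(1 / 2) : ℝ) := by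
    intro v
    obtain ⟨h1, h2⟩ := good_Lk hT hs (s := s) k
    have hb := norm_SL_le hsre (fun p hp => (h2 p hp).imp And.left id) v
    have h3 : (v ^ 2 + 1) ^ (-((1 + (k : ℝ)) / 2)) ≤ (v ^ 2 + 1) ^ (-(1 / 2) : ℝ) := by
      apply Real.rpow_le_rpow_of_exponent_le (one_le_sq_add_one v)
      have : (0:ℝ) ≤ k := Nat.cast_nonneg _
      linarith
    calc ‖SL s (Lk s k) v‖ ≤ csum (Lk s k) * (v ^ 2 + 1) ^ (-((1 + (k : ℝ)) / 2)) := hb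
      _ ≤ Ck T k * (v ^ 2 + 1) ^ (-((1 + (k : ℝ)) / 2)) :=
          mul_le_mul_of_nonneg_right h1 (Real.rpow_nonneg (sq_add_one_pos v).le _)
      _ ≤ Ck T k * (v ^ 2 + 1) ^ (-(1 / 2) : ℝ) :=
          mul_le_mul_of_nonneg_left h3 (Ck_pos hT k).le
  have hlim : Filter.Tendsto (fun R : ℝ => 2 * (Ck T k * (R ^ 2 + 1) ^ (-(1 / 2) : ℝ)))
      Filter.atTop (nhds 0) := by
    have h1 : Filter.Tendsto (fun R : ℝ => R ^ 2 + 1) Filter.atTop Filter.atTop := by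
      apply Filter.tendsto_atTop_add_const_right
      exact tendsto_pow_atTop (by norm_num)
    have h2 := (tendsto_rpow_neg_atTop (by norm_num : (0:ℝ) < 1 / 2)).comp h1
    have := h2.const_mul (Ck T k)
    simpa [mul_comm] using (this.const_mul (2:ℝ))
  apply squeeze_zero_norm _ hlim
  intro R
  calc ‖SL s (Lk s k) R * Complex.exp (Complex.I * R * w)
        - SL s (Lk s k) (-R) * Complex.exp (Complex.I * ((-R : ℝ) : ℂ) * w)‖
      ≤ ‖SL s (Lk s k) R * Complex.exp (Complex.I * R * w)‖
        + ‖SL s (Lk s k) (-R) * Complex.exp (Complex.I * ((-R : ℝ) : ℂ) * w)‖ := norm_sub_le _ _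
    _ = ‖SL s (Lk s k) R‖ + ‖SL s (Lk s k) (-R)‖ := by
        rw [norm_mul, norm_mul]
        simp [Complex.norm_exp, Complex.mul_re, Complex.mul_im]
    _ ≤ 2 * (Ck T k * (R ^ 2 + 1) ^ (-(1 / 2) : ℝ)) := by
        have h1 := key R
        have h2 := key (-R)
        rw [show ((-R : ℝ)) ^ 2 = R ^ 2 by ring] at h2
        linarith

lemma tendsto_interval_g (hsre : s.re = 1 / 2) (hT : 1 ≤ T) (hs : ‖s‖ ≤ T)
    (hw : 0 < w) (k : ℕ) :
    Filter.Tendsto (fun R : ℝ => ∫ v in (-R)..R, g s w k v) Filter.atTop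
      (nhds (-(Complex.I * w)⁻¹ * G s w (k + 1))) := by
  have hint := integrable_g (w := w) hsre hT hs (Nat.le_add_left 1 k)
  have h1 : Filter.Tendsto (fun R : ℝ => ∫ v in (-R)..R, g s w (k + 1) v) Filter.atTop
      (nhds (G s w (k + 1))) :=
    MeasureTheory.intervalIntegral_tendsto_integral hint
      tendsto_neg_atTop_atBot Filter.tendsto_id
  have h2 := tendsto_boundary (w := w) hsre hT hs k
  have h3 := ((h2.div_const (Complex.I * w)).sub (h1.const_mul (Complex.I * w)⁻¹))
  have : (0 : ℂ) / (Complex.I * w) - (Complex.I * w)⁻¹ * G s w (k + 1)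
      = -(Complex.I * w)⁻¹ * G s w (k + 1) := by ring
  rw [this] at h3
  apply h3.congr
  intro R
  rw [ibp s hw.ne' k R]

lemma G_succ (hsre : s.re = 1 / 2) (hT : 1 ≤ T) (hs : ‖s‖ ≤ T) (hw : 0 < w) {k : ℕ}
    (hk : 1 ≤ k) : G s w k = -(Complex.I * w)⁻¹ * G s w (k + 1) := by
  have h1 : Filter.Tendsto (fun R : ℝ => ∫ v in (-R)..R, g s w k v) Filter.atTop
      (nhds (G s w k)) :=
    MeasureTheory.intervalIntegral_tendsto_integral (integrable_g hsre hT hs hk)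
      tendsto_neg_atTop_atBot Filter.tendsto_id
  exact tendsto_nhds_unique h1 (tendsto_interval_g hsre hT hs hw k)

lemma G_pow (hsre : s.re = 1 / 2) (hT : 1 ≤ T) (hs : ‖s‖ ≤ T) (hw : 0 < w) (n : ℕ) :
    G s w 1 = (-(Complex.I * w)⁻¹) ^ n * G s w (n + 1) := by
  induction n with
  | zero => simp
  | succ n ih =>
      rw [ih, G_succ hsre hT hs hw (Nat.le_add_left 1 n), pow_succ]
      ring


lemma SL_zero (s : ℂ) (v : ℝ) : SL s (Lk s 0) v = ((v ^ 2 + 1 : ℝ) : ℂ) ^ (-s) := by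
  have hpos := sq_add_one_pos v
  have hne : ((v ^ 2 + 1 : ℝ) : ℂ) ≠ 0 := Complex.ofReal_ne_zero.mpr hpos.ne'
  rw [Complex.cpow_def_of_ne_zero hne, ← Complex.ofReal_log hpos.le]
  show tm s (1, 0, 0) v + 0 = _
  rw [add_zero]
  unfold tm
  simp only [pow_zero, Nat.cast_zero, add_zero, one_mul, mul_one]
  ring_nf

lemma SL_even (s : ℂ) (k : ℕ) (v : ℝ) : SL s (Lk s 0) v = SL s (Lk s 0) (-v) := by
  rw [SL_zero, SL_zero, show ((-v : ℝ)) ^ 2 = v ^ 2 by ring]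

lemma interval_eq (s : ℂ) (w : ℝ) (R : ℝ) :
    (∫ v in (0:ℝ)..R, ((v ^ 2 + 1 : ℝ) : ℂ) ^ (-s) * (Real.cos (v * w) : ℂ))
      = (1 / 2) * ∫ v in (-R)..R, g s w 0 v := by
  have hcont : Continuous (g s w 0) := continuous_g s w 0
  have h1 : IntervalIntegrable (g s w 0) MeasureTheory.volume (-R) 0 :=
    hcont.intervalIntegrable _ _
  have h2 : IntervalIntegrable (g s w 0) MeasureTheory.volume 0 R :=
    hcont.intervalIntegrable _ _
  have hsplit := intervalIntegral.integral_add_adjacent_intervals h1 h2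
  have hneg : (∫ v in (-R)..(0:ℝ), g s w 0 v) = ∫ v in (0:ℝ)..R, g s w 0 (-v) := by
    rw [intervalIntegral.integral_comp_neg (fun x => g s w 0 x)]
    norm_num
  have hflip : ∀ v : ℝ, g s w 0 (-v)
      = SL s (Lk s 0) v * Complex.exp (-(Complex.I * v * w)) := by
    intro v
    rw [g, ← SL_even s 0 v]
    congr 1
    push_cast
    ring_nf
  have hcomb : (∫ v in (0:ℝ)..R, g s w 0 (-v)) + (∫ v in (0:ℝ)..R, g s w 0 v)
      = ∫ v in (0:ℝ)..R, (2 : ℂ) * (((v ^ 2 + 1 : ℝ) : ℂ) ^ (-s) * (Real.cos (v * w) : ℂ)) := by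
    have hnegint : IntervalIntegrable (fun v : ℝ => g s w 0 (-v)) MeasureTheory.volume 0 R := by
      have : Continuous (fun v : ℝ => g s w 0 (-v)) := hcont.comp continuous_neg
      exact this.intervalIntegrable _ _
    rw [← intervalIntegral.integral_add hnegint (hcont.intervalIntegrable _ _)]
    apply intervalIntegral.integral_congr
    intro v _
    show g s w 0 (-v) + g s w 0 v = _
    rw [hflip v, g, SL_zero]
    show _ = 2 * (((v ^ 2 + 1 : ℝ) : ℂ) ^ (-s) * (Real.cos (v * w) : ℂ))
    rw [Complex.ofReal_cos, show ((v * w : ℝ) : ℂ) = (v : ℂ) * w by push_cast; ring,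
      show (2 : ℂ) * (((v ^ 2 + 1 : ℝ) : ℂ) ^ (-s) * Complex.cos ((v:ℂ) * w))
        = ((v ^ 2 + 1 : ℝ) : ℂ) ^ (-s) * (2 * Complex.cos ((v:ℂ) * w)) by ring,
      Complex.two_cos]
    ring_nf
  rw [← hsplit, hneg, hcomb, intervalIntegral.integral_const_mul]
  ring

/-- the limit value -/
def Iv (s : ℂ) (w : ℝ) : ℂ := (1 / 2) * (-(Complex.I * w)⁻¹ * G s w 1)

lemma main_tendsto (hsre : s.re = 1 / 2) (hT : 1 ≤ T) (hs : ‖s‖ ≤ T) (hw : 0 < w) :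
    Filter.Tendsto (fun R : ℝ => ∫ v in (0:ℝ)..R,
        ((v ^ 2 + 1 : ℝ) : ℂ) ^ (-s) * (Real.cos (v * w) : ℂ))
      Filter.atTop (nhds (Iv s w)) := by
  have h := (tendsto_interval_g hsre hT hs hw 0).const_mul ((1 : ℂ) / 2)
  apply h.congr
  intro R
  rw [interval_eq]

lemma norm_Iv_le (hsre : s.re = 1 / 2) (hT : 1 ≤ T) (hs : ‖s‖ ≤ T) (hw : 0 < w)
    {A : ℕ} (hA : 1 ≤ A) :
    ‖Iv s w‖ ≤ Real.pi * Ck T A * (1 / w) ^ A := by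
  obtain ⟨n, rfl⟩ : ∃ n, A = n + 1 := ⟨A - 1, by omega⟩
  have hpow := G_pow hsre hT hs hw n
  have hIw : ‖-(Complex.I * (w:ℂ))⁻¹‖ = 1 / w := by
    rw [norm_neg, norm_inv, norm_mul, Complex.norm_I, one_mul, Complex.norm_real,
      Real.norm_eq_abs, abs_of_pos hw, one_div]
  have : Iv s w = (1 / 2) * ((-(Complex.I * w)⁻¹) ^ (n + 1) * G s w (n + 1)) := by
    rw [Iv, hpow]; ring
  rw [this, norm_mul, norm_mul, norm_pow, hIw]
  have hG := norm_G_le (w := w) hsre hT hs (Nat.le_add_left 1 n)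
  have h12 : ‖(1 / 2 : ℂ)‖ = 1 / 2 := by norm_num
  rw [h12]
  have hwpos : (0:ℝ) < 1 / w := by positivity
  calc (1 / 2) * ((1 / w) ^ (n + 1) * ‖G s w (n + 1)‖)
      ≤ 1 * ((1 / w) ^ (n + 1) * (Ck T (n + 1) * Real.pi)) := by
        apply mul_le_mul (by norm_num) _ (by positivity) (by norm_num)
        exact mul_le_mul_of_nonneg_left hG (by positivity)
    _ = Real.pi * Ck T (n + 1) * (1 / w) ^ (n + 1) := by ring


lemma norm_SL_half (hsre : s.re = 1 / 2) (hT : 1 ≤ T) (hs : ‖s‖ ≤ T) (k : ℕ) (v : ℝ) :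
    ‖SL s (Lk s k) v‖ ≤ Ck T k * (v ^ 2 + 1) ^ (-(1 / 2) : ℝ) := by
  obtain ⟨h1, h2⟩ := good_Lk hT hs (s := s) k
  have hb := norm_SL_le hsre (fun p hp => (h2 p hp).imp And.left id) v
  have h3 : (v ^ 2 + 1) ^ (-((1 + (k : ℝ)) / 2)) ≤ (v ^ 2 + 1) ^ (-(1 / 2) : ℝ) := by
    apply Real.rpow_le_rpow_of_exponent_le (one_le_sq_add_one v)
    have : (0:ℝ) ≤ k := Nat.cast_nonneg _
    linarith
  calc ‖SL s (Lk s k) v‖ ≤ csum (Lk s k) * (v ^ 2 + 1) ^ (-((1 + (k : ℝ)) / 2)) := hb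
    _ ≤ Ck T k * (v ^ 2 + 1) ^ (-((1 + (k : ℝ)) / 2)) :=
        mul_le_mul_of_nonneg_right h1 (Real.rpow_nonneg (sq_add_one_pos v).le _)
    _ ≤ Ck T k * (v ^ 2 + 1) ^ (-(1 / 2) : ℝ) :=
        mul_le_mul_of_nonneg_left h3 (Ck_pos hT k).le

lemma rpow_half_le_inv (V : ℝ) (hV : 0 < V) :
    (V ^ 2 + 1) ^ (-(1 / 2) : ℝ) ≤ V⁻¹ := by
  rw [show (-(1/2) : ℝ) = -(1/2) by norm_num, Real.rpow_neg (sq_add_one_pos V).le,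
    show ((1:ℝ)/2) = (1/2 : ℝ) from rfl]
  rw [← Real.sqrt_eq_rpow]
  apply inv_anti₀ hV
  calc V = Real.sqrt (V ^ 2) := by rw [Real.sqrt_sq hV.le]
    _ ≤ Real.sqrt (V ^ 2 + 1) := Real.sqrt_le_sqrt (by linarith)

lemma tendsto_Ck_rpow (c : ℝ) :
    Filter.Tendsto (fun R : ℝ => c * (R ^ 2 + 1) ^ (-(1 / 2) : ℝ)) Filter.atTop (nhds 0) := by
  have h1 : Filter.Tendsto (fun R : ℝ => R ^ 2 + 1) Filter.atTop Filter.atTop := by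
    apply Filter.tendsto_atTop_add_const_right
    exact tendsto_pow_atTop (by norm_num)
  have h2 := (tendsto_rpow_neg_atTop (by norm_num : (0:ℝ) < 1 / 2)).comp h1
  have h3 := h2.const_mul c
  simpa [mul_comm, Function.comp] using h3

/-- integrability of `SL (Lk 1) * sin(vw)/w` -/
lemma integrable_f1sin (hsre : s.re = 1 / 2) (hT : 1 ≤ T) (hs : ‖s‖ ≤ T) (w : ℝ) (hw : 0 < w) :
    MeasureTheory.Integrable
      (fun v : ℝ => SL s (Lk s 1) v * ((Real.sin (v * w) : ℂ) / (w : ℂ))) := by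
  apply MeasureTheory.Integrable.mono'
    ((integrable_inv_one_add_sq.const_mul (Ck T 1)).div_const w)
  · apply Continuous.aestronglyMeasurable
    apply (continuous_SL s (Lk s 1)).mul
    fun_prop
  · apply Filter.Eventually.of_forall
    intro v
    rw [norm_mul, norm_div]
    have h1 : ‖SL s (Lk s 1) v‖ ≤ Ck T 1 * (1 + v ^ 2)⁻¹ := by
      have := norm_g_le_inv_sq (w := w) hsre hT hs le_rfl v
      rwa [g, norm_mul, norm_exp_I_mul, mul_one] at this
    have h2 : ‖((Real.sin (v * w) : ℝ) : ℂ)‖ ≤ 1 := by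
      rw [Complex.norm_real, Real.norm_eq_abs]
      exact Real.abs_sin_le_one _
    have h3 : ‖((w : ℝ) : ℂ)‖ = w := by
      rw [Complex.norm_real, Real.norm_eq_abs, abs_of_pos hw]
    rw [h3]
    calc ‖SL s (Lk s 1) v‖ * (‖((Real.sin (v * w) : ℝ) : ℂ)‖ / w)
        ≤ ‖SL s (Lk s 1) v‖ * (1 / w) := by
          apply mul_le_mul_of_nonneg_left _ (norm_nonneg _)
          apply div_le_div_of_nonneg_right h2 hw.le |>.trans_eq rfl
      _ ≤ (Ck T 1 * (1 + v ^ 2)⁻¹) * (1 / w) := by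
          apply mul_le_mul_of_nonneg_right h1 (by positivity)
      _ = Ck T 1 * (1 + v ^ 2)⁻¹ / w := by ring

lemma norm_Iv_le_zero {ε : ℝ} (hε : 0 < ε) (hsre : s.re = 1 / 2) (hT : 1 ≤ T)
    (hs : ‖s‖ ≤ T) (hw : 0 < w) :
    ‖Iv s w‖ ≤ (Real.sqrt 2 * 2 ^ ε / ε + 9) * (1 + T / w) ^ ε := by
  set V : ℝ := 1 + T / w with hVdef
  have hTpos : (0:ℝ) < T := by linarith
  have hV1 : (1:ℝ) ≤ V := by
    rw [hVdef]
    have : 0 ≤ T / w := by positivity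
    linarith
  have hVpos : (0:ℝ) < V := by linarith
  have hwV : T ≤ w * V := by
    have : w * V = w + T := by rw [hVdef]; field_simp
    linarith
  have h1wV : (1:ℝ) ≤ w * V := le_trans hT hwV
  set F : ℝ → ℂ := fun v => SL s (Lk s 0) v * (Real.cos (v * w) : ℂ) with hFdef
  have hFcont : Continuous F := by
    apply (continuous_SL s (Lk s 0)).mul; fun_prop
  have hFeq : ∀ R : ℝ, (∫ v in (0:ℝ)..R, ((v ^ 2 + 1 : ℝ) : ℂ) ^ (-s) * (Real.cos (v * w) : ℂ))
      = ∫ v in (0:ℝ)..R, F v := by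
    intro R
    apply intervalIntegral.integral_congr
    intro v _
    rw [hFdef]
    simp only
    rw [SL_zero]
  -- tail tendsto
  have htail : Filter.Tendsto (fun R : ℝ => ∫ v in V..R, F v) Filter.atTop
      (nhds (Iv s w - ∫ v in (0:ℝ)..V, F v)) := by
    have hmain := main_tendsto hsre hT hs hw
    have hmain' : Filter.Tendsto (fun R : ℝ => ∫ v in (0:ℝ)..R, F v) Filter.atTop
        (nhds (Iv s w)) := by
      apply hmain.congr
      intro R; exact hFeq R
    have := hmain'.sub_const (∫ v in (0:ℝ)..V, F v)
    apply this.congr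
    intro R
    rw [sub_eq_iff_eq_add']
    exact (intervalIntegral.integral_add_adjacent_intervals
      (hFcont.intervalIntegrable 0 V) (hFcont.intervalIntegrable V R)).symm
  -- IBP on the tail
  have hsinD : ∀ x : ℝ, HasDerivAt (fun x : ℝ => ((Real.sin (x * w) : ℝ) : ℂ) / (w : ℂ))
      ((Real.cos (x * w) : ℝ) : ℂ) x := by
    intro x
    have h1 : HasDerivAt (fun x : ℝ => Real.sin (x * w)) (Real.cos (x * w) * w) x := by
      simpa [Function.comp_def] using (Real.hasDerivAt_sin (x * w)).comp x (hasDerivAt_mul_const w)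
    have h2 := (h1.ofReal_comp).div_const (w : ℂ)
    have hwne : ((w : ℝ) : ℂ) ≠ 0 := Complex.ofReal_ne_zero.mpr hw.ne'
    refine h2.congr_deriv ?_
    push_cast
    field_simp
  have hibpR : ∀ R : ℝ, (∫ v in V..R, F v)
      = SL s (Lk s 0) R * ((Real.sin (R * w) : ℂ) / w)
        - SL s (Lk s 0) V * ((Real.sin (V * w) : ℂ) / w)
        - ∫ v in V..R, SL s (Lk s 1) v * ((Real.sin (v * w) : ℂ) / w) := by
    intro R
    have hu : ∀ x ∈ Set.uIcc V R, HasDerivAt (SL s (Lk s 0)) (SL s (Lk s 1) x) x := by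
      intro x _
      have := hasDerivAt_SL s (Lk s 0) x
      rwa [show dL s (Lk s 0) = Lk s 1 from (Function.iterate_succ_apply' (dL s) 0 _).symm]
        at this
    have hv : ∀ x ∈ Set.uIcc V R,
        HasDerivAt (fun x : ℝ => ((Real.sin (x * w) : ℝ) : ℂ) / (w : ℂ))
          ((Real.cos (x * w) : ℝ) : ℂ) x := fun x _ => hsinD x
    have hu' : IntervalIntegrable (SL s (Lk s 1)) MeasureTheory.volume V R :=
      (continuous_SL s (Lk s 1)).intervalIntegrable _ _
    have hv' : IntervalIntegrable (fun x : ℝ => ((Real.cos (x * w) : ℝ) : ℂ))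
        MeasureTheory.volume V R := by
      apply Continuous.intervalIntegrable; fun_prop
    exact intervalIntegral.integral_mul_deriv_eq_deriv_mul hu hv hu' hv'
  have hterm1 : Filter.Tendsto (fun R : ℝ => SL s (Lk s 0) R * ((Real.sin (R * w) : ℂ) / w))
      Filter.atTop (nhds 0) := by
    apply squeeze_zero_norm _ (tendsto_Ck_rpow (Ck T 0 * (1 / w)))
    intro R
    rw [norm_mul, norm_div]
    have h1 := norm_SL_half hsre hT hs 0 R
    have h2 : ‖((Real.sin (R * w) : ℝ) : ℂ)‖ ≤ 1 := by
      rw [Complex.norm_real, Real.norm_eq_abs]; exact Real.abs_sin_le_one _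
    have h3 : ‖((w : ℝ) : ℂ)‖ = w := by
      rw [Complex.norm_real, Real.norm_eq_abs, abs_of_pos hw]
    rw [h3]
    calc ‖SL s (Lk s 0) R‖ * (‖((Real.sin (R * w) : ℝ) : ℂ)‖ / w)
        ≤ (Ck T 0 * (R ^ 2 + 1) ^ (-(1 / 2) : ℝ)) * (1 / w) := by
          apply mul_le_mul h1 (div_le_div_of_nonneg_right h2 hw.le) (by positivity)
            (mul_nonneg (Ck_pos hT 0).le (Real.rpow_nonneg (sq_add_one_pos R).le _))
      _ = Ck T 0 * (1 / w) * (R ^ 2 + 1) ^ (-(1 / 2) : ℝ) := by ring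
  have hint1 := integrable_f1sin (T := T) hsre hT hs w hw
  have hterm3 : Filter.Tendsto
      (fun R : ℝ => ∫ v in V..R, SL s (Lk s 1) v * ((Real.sin (v * w) : ℂ) / w))
      Filter.atTop
      (nhds (∫ v in Set.Ioi V, SL s (Lk s 1) v * ((Real.sin (v * w) : ℂ) / w))) :=
    MeasureTheory.intervalIntegral_tendsto_integral_Ioi V hint1.integrableOn
      Filter.tendsto_id
  have htail2 : Filter.Tendsto (fun R : ℝ => ∫ v in V..R, F v) Filter.atTop
      (nhds (0 - SL s (Lk s 0) V * ((Real.sin (V * w) : ℂ) / w)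
        - ∫ v in Set.Ioi V, SL s (Lk s 1) v * ((Real.sin (v * w) : ℂ) / w))) := by
    have := (hterm1.sub_const (SL s (Lk s 0) V * ((Real.sin (V * w) : ℂ) / w))).sub hterm3
    apply this.congr
    intro R
    rw [hibpR R]
  have heq := tendsto_nhds_unique htail htail2
  -- now bound everything
  have hIv : Iv s w = (∫ v in (0:ℝ)..V, F v)
      - SL s (Lk s 0) V * ((Real.sin (V * w) : ℂ) / w)
      - ∫ v in Set.Ioi V, SL s (Lk s 1) v * ((Real.sin (v * w) : ℂ) / w) := by
    rw [zero_sub] at heq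
    have := heq
    linear_combination this + (∫ v in (0:ℝ)..V, F v : ℂ)
  -- head bound
  have hhead : ‖∫ v in (0:ℝ)..V, F v‖ ≤ Real.sqrt 2 * Real.log (V + 1) := by
    calc ‖∫ v in (0:ℝ)..V, F v‖ ≤ ∫ v in (0:ℝ)..V, ‖F v‖ :=
          intervalIntegral.norm_integral_le_integral_norm (by linarith)
      _ ≤ ∫ v in (0:ℝ)..V, Real.sqrt 2 * (v + 1)⁻¹ := by
          apply intervalIntegral.integral_mono_on (by linarith)
            (hFcont.norm.intervalIntegrable _ _)
          · apply ContinuousOn.intervalIntegrable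
            apply ContinuousOn.mul continuousOn_const
            apply ContinuousOn.inv₀ (by fun_prop)
            intro x hx
            rw [Set.uIcc_of_le (by linarith : (0:ℝ) ≤ V)] at hx
            have := hx.1; positivity
          · intro v hv
            have hv0 : 0 ≤ v := hv.1
            have h1 : ‖F v‖ ≤ (v ^ 2 + 1) ^ (-(1 / 2) : ℝ) := by
              rw [hFdef]
              simp only
              rw [norm_mul]
              have ha := norm_SL_half hsre hT hs 0 v
              have hb : ‖((Real.cos (v * w) : ℝ) : ℂ)‖ ≤ 1 := by
                rw [Complex.norm_real, Real.norm_eq_abs]; exact Real.abs_cos_le_one _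
              have hCk0 : Ck T 0 = 1 := by simp [Ck]
              rw [hCk0, one_mul] at ha
              calc ‖SL s (Lk s 0) v‖ * ‖((Real.cos (v * w) : ℝ) : ℂ)‖
                  ≤ (v ^ 2 + 1) ^ (-(1 / 2) : ℝ) * 1 :=
                    mul_le_mul ha hb (norm_nonneg _) (Real.rpow_nonneg (sq_add_one_pos v).le _)
                _ = (v ^ 2 + 1) ^ (-(1 / 2) : ℝ) := mul_one _
            have h2 : (v ^ 2 + 1) ^ (-(1 / 2) : ℝ) ≤ Real.sqrt 2 * (v + 1)⁻¹ := by
              rw [Real.rpow_neg (sq_add_one_pos v).le, ← Real.sqrt_eq_rpow]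
              have hb : 0 < Real.sqrt (v ^ 2 + 1) := Real.sqrt_pos.mpr (sq_add_one_pos v)
              have key : v + 1 ≤ Real.sqrt 2 * Real.sqrt (v ^ 2 + 1) := by
                rw [← Real.sqrt_mul (by norm_num : (0:ℝ) ≤ 2)]
                calc v + 1 = Real.sqrt ((v + 1) ^ 2) := (Real.sqrt_sq (by linarith)).symm
                  _ ≤ Real.sqrt (2 * (v ^ 2 + 1)) := Real.sqrt_le_sqrt (by nlinarith [sq_nonneg (v - 1)])
              rw [show (Real.sqrt 2 * (v + 1)⁻¹) = Real.sqrt 2 / (v + 1) by ring,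
                inv_eq_one_div, div_le_div_iff₀ hb (by linarith : (0:ℝ) < v + 1)]
              linarith
            linarith
      _ = Real.sqrt 2 * Real.log (V + 1) := by
          rw [intervalIntegral.integral_const_mul]
          congr 1
          have : (∫ v in (0:ℝ)..V, (v + 1)⁻¹) = ∫ x in (0+1:ℝ)..(V+1), x⁻¹ := by
            exact intervalIntegral.integral_comp_add_right (fun x => x⁻¹) 1
          rw [this, zero_add, integral_inv (by
            rw [Set.uIcc_of_le (by linarith : (1:ℝ) ≤ V + 1)]
            intro h
            have := h.1; linarith), div_one]
  -- middle bound
  have hmid : ‖SL s (Lk s 0) V * ((Real.sin (V * w) : ℂ) / w)‖ ≤ 1 := by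
    rw [norm_mul, norm_div]
    have h1 := norm_SL_half hsre hT hs 0 V
    have hCk0 : Ck T 0 = 1 := by simp [Ck]
    rw [hCk0, one_mul] at h1
    have h2 : ‖((Real.sin (V * w) : ℝ) : ℂ)‖ ≤ 1 := by
      rw [Complex.norm_real, Real.norm_eq_abs]; exact Real.abs_sin_le_one _
    have h3 : ‖((w : ℝ) : ℂ)‖ = w := by
      rw [Complex.norm_real, Real.norm_eq_abs, abs_of_pos hw]
    rw [h3]
    calc ‖SL s (Lk s 0) V‖ * (‖((Real.sin (V * w) : ℝ) : ℂ)‖ / w)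
        ≤ V⁻¹ * (1 / w) := by
          apply mul_le_mul (h1.trans (rpow_half_le_inv V hVpos))
            (div_le_div_of_nonneg_right h2 hw.le) (by positivity) (by positivity)
      _ = (w * V)⁻¹ := by rw [mul_inv]; ring
      _ ≤ 1 := by
          rw [inv_le_one_iff₀]; right; exact h1wV
  -- tail integral bound
  have htailbd : ‖∫ v in Set.Ioi V, SL s (Lk s 1) v * ((Real.sin (v * w) : ℂ) / w)‖
      ≤ 8 := by
    have hb : MeasureTheory.IntegrableOn (fun v : ℝ => Ck T 1 / w * v ^ (-2 : ℝ))
        (Set.Ioi V) := by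
      exact (integrableOn_Ioi_rpow_of_lt (by norm_num) hVpos).const_mul _
    have hptwise : ∀ v ∈ Set.Ioi V, ‖SL s (Lk s 1) v * ((Real.sin (v * w) : ℂ) / w)‖
        ≤ Ck T 1 / w * v ^ (-2 : ℝ) := by
      intro v hv
      have hv1 : 1 ≤ v := le_trans hV1 (le_of_lt hv)
      have hvpos : 0 < v := by linarith
      rw [norm_mul, norm_div]
      have h1 : ‖SL s (Lk s 1) v‖ ≤ Ck T 1 * (1 + v ^ 2)⁻¹ := by
        have := norm_g_le_inv_sq (w := w) hsre hT hs le_rfl v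
        rwa [g, norm_mul, norm_exp_I_mul, mul_one] at this
      have h2 : ‖((Real.sin (v * w) : ℝ) : ℂ)‖ ≤ 1 := by
        rw [Complex.norm_real, Real.norm_eq_abs]; exact Real.abs_sin_le_one _
      have h3 : ‖((w : ℝ) : ℂ)‖ = w := by
        rw [Complex.norm_real, Real.norm_eq_abs, abs_of_pos hw]
      rw [h3]
      have h4 : (1 + v ^ 2)⁻¹ ≤ v ^ (-2 : ℝ) := by
        rw [show ((-2 : ℝ)) = -(2 : ℕ) by norm_num, Real.rpow_neg hvpos.le,
          Real.rpow_natCast]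
        apply inv_anti₀ (by positivity)
        linarith
      calc ‖SL s (Lk s 1) v‖ * (‖((Real.sin (v * w) : ℝ) : ℂ)‖ / w)
          ≤ (Ck T 1 * (1 + v ^ 2)⁻¹) * (1 / w) :=
            mul_le_mul h1 (div_le_div_of_nonneg_right h2 hw.le)
              (div_nonneg (norm_nonneg _) hw.le)
              (mul_nonneg (Ck_pos hT 1).le (by positivity))
        _ ≤ (Ck T 1 * v ^ (-2 : ℝ)) * (1 / w) := by
            apply mul_le_mul_of_nonneg_right _ (by positivity)
            exact mul_le_mul_of_nonneg_left h4 (Ck_pos hT 1).le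
        _ = Ck T 1 / w * v ^ (-2 : ℝ) := by ring
    have hnorm := MeasureTheory.norm_integral_le_of_norm_le hb
      ((MeasureTheory.ae_restrict_iff' measurableSet_Ioi).mpr
        (Filter.Eventually.of_forall hptwise))
    have hval : (∫ v in Set.Ioi V, Ck T 1 / w * v ^ (-2 : ℝ)) = Ck T 1 / w * V⁻¹ := by
      rw [MeasureTheory.integral_const_mul, integral_Ioi_rpow_of_lt (by norm_num) hVpos]
      rw [show ((-2:ℝ) + 1) = -1 by norm_num, Real.rpow_neg_one]
      ring
    rw [hval] at hnorm
    have hCk1 : Ck T 1 = 8 * T := by norm_num [Ck]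
    calc ‖∫ v in Set.Ioi V, SL s (Lk s 1) v * ((Real.sin (v * w) : ℂ) / w)‖
        ≤ Ck T 1 / w * V⁻¹ := hnorm
      _ = 8 * T / (w * V) := by rw [hCk1]; field_simp
      _ ≤ 8 := by
          rw [div_le_iff₀ (by positivity)]
          nlinarith
  -- log bound
  have hlog : Real.log (V + 1) ≤ 2 ^ ε / ε * V ^ ε := by
    have h1 : Real.log (V + 1) = (1 / ε) * Real.log ((V + 1) ^ ε) := by
      rw [Real.log_rpow (by linarith)]
      field_simp
    have h2 : Real.log ((V + 1) ^ ε) ≤ (V + 1) ^ ε - 1 :=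
      Real.log_le_sub_one_of_pos (Real.rpow_pos_of_pos (by linarith) ε)
    have h3 : (V + 1) ^ ε ≤ (2 * V) ^ ε := by
      apply Real.rpow_le_rpow (by linarith) (by linarith) hε.le
    have h4 : ((2:ℝ) * V) ^ ε = 2 ^ ε * V ^ ε :=
      Real.mul_rpow (by norm_num) hVpos.le
    calc Real.log (V + 1) = (1 / ε) * Real.log ((V + 1) ^ ε) := h1
      _ ≤ (1 / ε) * ((V + 1) ^ ε - 1) := by
          apply mul_le_mul_of_nonneg_left h2 (by positivity)
      _ ≤ (1 / ε) * (2 ^ ε * V ^ ε) := by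
          apply mul_le_mul_of_nonneg_left _ (by positivity)
          rw [← h4]; linarith
      _ = 2 ^ ε / ε * V ^ ε := by ring
  -- assemble
  have hVe1 : (1:ℝ) ≤ V ^ ε := Real.one_le_rpow hV1 hε.le
  calc ‖Iv s w‖ ≤ ‖∫ v in (0:ℝ)..V, F v‖
        + ‖SL s (Lk s 0) V * ((Real.sin (V * w) : ℂ) / w)‖
        + ‖∫ v in Set.Ioi V, SL s (Lk s 1) v * ((Real.sin (v * w) : ℂ) / w)‖ := by
        rw [hIv]
        exact (norm_sub_le _ _).trans (by gcongr; exact norm_sub_le _ _)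
    _ ≤ Real.sqrt 2 * (2 ^ ε / ε * V ^ ε) + 1 + 8 := by
        have := hhead.trans (mul_le_mul_of_nonneg_left hlog (Real.sqrt_nonneg 2))
        linarith
    _ ≤ (Real.sqrt 2 * 2 ^ ε / ε + 9) * V ^ ε := by
        have h9 : (9:ℝ) ≤ 9 * V ^ ε := by nlinarith
        have hre : Real.sqrt 2 * (2 ^ ε / ε * V ^ ε) + 9 * V ^ ε
            = (Real.sqrt 2 * 2 ^ ε / ε + 9) * V ^ ε := by ring
        linarith

end Main

end Stmt9aux

open Complex in
/-- The oscillatory integral `I(t,w) = ∫₀^∞ (v² + 1)^{-(1/2 + it)} cos(vw) dv` exists as an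
improper Riemann-type limit and satisfies
`|I(t,w)| ≪_{A,ε} ((1 + |t|)/w)^A (1 + (1 + |t|)/w)^ε` for every integer `A ≥ 0` and
every `ε > 0`. -/
theorem stmt9 (A : ℕ) (ε : ℝ) (hε : 0 < ε) :
    ∃ C > (0 : ℝ), ∀ t : ℝ, ∀ w : ℝ, 0 < w →
      ∃ Iint : ℂ,
        Filter.Tendsto (fun R : ℝ => ∫ v in (0 : ℝ)..R,
            ((v ^ 2 + 1 : ℝ) : ℂ) ^ (-(1 / 2 + I * t)) * (Real.cos (v * w) : ℂ))
          Filter.atTop (nhds Iint) ∧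
        ‖Iint‖ ≤ C * ((1 + |t|) / w) ^ A * (1 + (1 + |t|) / w) ^ ε := by
  classical
  set C : ℝ := Real.pi * (4 * ((A : ℝ) + 1)) ^ A + Real.sqrt 2 * 2 ^ ε / ε + 10 with hCdef
  have hCpos : 0 < C := by
    have h1 : 0 < Real.pi * (4 * ((A : ℝ) + 1)) ^ A := by positivity
    have h2 : 0 ≤ Real.sqrt 2 * 2 ^ ε / ε := div_nonneg (by positivity) hε.le
    rw [hCdef]; linarith
  refine ⟨C, hCpos, ?_⟩
  intro t w hw
  set s : ℂ := 1 / 2 + I * t with hsdef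
  set T : ℝ := 1 + |t| with hTdef
  have hsre : s.re = 1 / 2 := by
    rw [hsdef]
    simp [Complex.add_re, Complex.mul_re]
  have hT : 1 ≤ T := by
    rw [hTdef]
    have := abs_nonneg t
    linarith
  have hs : ‖s‖ ≤ T := by
    rw [hsdef, hTdef]
    calc ‖(1 / 2 : ℂ) + I * t‖ ≤ ‖(1 / 2 : ℂ)‖ + ‖I * (t : ℂ)‖ := norm_add_le _ _
      _ = 1 / 2 + |t| := by
          rw [norm_mul, Complex.norm_I, one_mul, Complex.norm_real, Real.norm_eq_abs,
            show (1 / 2 : ℂ) = ((1 / 2 : ℝ) : ℂ) by norm_num, Complex.norm_real]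
          norm_num
      _ ≤ 1 + |t| := by norm_num
  refine ⟨Stmt9aux.Iv s w, ?_, ?_⟩
  · exact Stmt9aux.main_tendsto hsre hT hs hw
  · have hTw0 : (0:ℝ) ≤ T / w := by positivity
    have hone : (1:ℝ) ≤ (1 + T / w) ^ ε := Real.one_le_rpow (by linarith) hε.le
    rcases Nat.eq_zero_or_pos A with rfl | hA
    · have h := Stmt9aux.norm_Iv_le_zero (T := T) hε hsre hT hs hw
      calc ‖Stmt9aux.Iv s w‖ ≤ (Real.sqrt 2 * 2 ^ ε / ε + 9) * (1 + T / w) ^ ε := h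
        _ ≤ C * (1 + T / w) ^ ε := by
            apply mul_le_mul_of_nonneg_right _ (by positivity)
            have := Real.pi_pos
            rw [hCdef]
            simp only [pow_zero, mul_one]
            linarith
        _ = C * ((1 + |t|) / w) ^ (0:ℕ) * (1 + (1 + |t|) / w) ^ ε := by
            rw [pow_zero, mul_one, hTdef]
    · have h := Stmt9aux.norm_Iv_le (T := T) hsre hT hs hw hA
      have hkey : Real.pi * Stmt9aux.Ck T A * (1 / w) ^ A ≤ C * (T / w) ^ A := by
        have e1 : Real.pi * Stmt9aux.Ck T A * (1 / w) ^ A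
            = (Real.pi * (4 * ((A : ℝ) + 1)) ^ A) * (T / w) ^ A := by
          rw [Stmt9aux.Ck, div_pow, div_pow]
          field_simp
          ring
        rw [e1]
        apply mul_le_mul_of_nonneg_right _ (by positivity)
        have h2 : 0 ≤ Real.sqrt 2 * 2 ^ ε / ε := div_nonneg (by positivity) hε.le
        rw [hCdef]
        linarith
      calc ‖Stmt9aux.Iv s w‖ ≤ Real.pi * Stmt9aux.Ck T A * (1 / w) ^ A := h
        _ ≤ C * (T / w) ^ A := hkey
        _ ≤ C * (T / w) ^ A * (1 + T / w) ^ ε := by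
            apply le_mul_of_one_le_right _ hone
            positivity
        _ = C * ((1 + |t|) / w) ^ A * (1 + (1 + |t|) / w) ^ ε := by rw [hTdef]
end
end

section
/- For all reals 0 < a ≤ b there is a constant C > 0 (depending only on a and b) such that for every integer k ≥ 3 and every complex s with a ≤ Re(s) ≤ b: |Γ(s + k - 1)/Γ(k - 1) - (k - 1)^s| ≤ C · (1 + |s|)² · k^{-1} · |(k - 1)^s|; equivalently, Γ(s + k - 1)/Γ(k - 1) = (k - 1)^s (1 + O_{a,b}((|s| + 1)² k^{-1})) uniformly in the strip. -/
open Real Set Complex MeasureTheory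



lemma gamma_add_nat_le (x : ℝ) (hx : 0 < x) (m : ℕ) :
    Real.Gamma (x + m) ≤ Real.Gamma x * (x + m) ^ m := by
  induction m with
  | zero => simp
  | succ m ih =>
    have hxm : (0:ℝ) < x + m := by positivity
    have h1 : Real.Gamma (x + (m+1 : ℕ)) = (x + m) * Real.Gamma (x + m) := by
      push_cast
      rw [show x + ((m:ℝ)+1) = (x + m) + 1 by ring, Real.Gamma_add_one hxm.ne']
    rw [h1]
    have h2 : (x + m) * Real.Gamma (x + m) ≤ (x + m) * (Real.Gamma x * (x + m) ^ m) :=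
      mul_le_mul_of_nonneg_left ih hxm.le
    refine h2.trans ?_
    have h3 : (x + m) ^ (m+1) ≤ (x + (m+1:ℕ)) ^ (m+1) := by
      apply pow_le_pow_left₀ hxm.le; push_cast; linarith
    calc (x + m) * (Real.Gamma x * (x + m) ^ m)
        = Real.Gamma x * (x + m) ^ (m+1) := by ring
      _ ≤ Real.Gamma x * (x + (m+1:ℕ)) ^ (m+1) :=
          mul_le_mul_of_nonneg_left h3 (Real.Gamma_pos_of_pos hx).le

lemma gamma_add_le (x z : ℝ) (m : ℕ) (hx : 0 < x) (hz : 0 ≤ z) (hzm : z ≤ m) :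
    Real.Gamma (x + z) ≤ Real.Gamma x * (x + m) ^ z := by
  rcases Nat.eq_zero_or_pos m with hm | hm
  · have : z = 0 := le_antisymm (by simpa [hm] using hzm) hz
    simp [this]
  have hm' : (0:ℝ) < m := by exact_mod_cast hm
  set t : ℝ := z / m with ht
  have ht0 : 0 ≤ t := div_nonneg hz hm'.le
  have ht1 : t ≤ 1 := by rw [ht, div_le_one hm']; exact hzm
  have hxz : x + z = (1 - t) • x + t • (x + m) := by
    have htm : t * m = z := by rw [ht, div_mul_cancel₀ _ hm'.ne']
    simp only [smul_eq_mul]; linear_combination -htm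
  have hmem1 : x ∈ Ioi (0:ℝ) := hx
  have hmem2 : x + (m:ℝ) ∈ Ioi (0:ℝ) := by simp; positivity
  have hcvx := Real.convexOn_log_Gamma.2 hmem1 hmem2 (show (0:ℝ) ≤ 1 - t by linarith) ht0 (by ring)
  rw [← hxz] at hcvx
  simp only [Function.comp] at hcvx
  -- hcvx : log (Gamma (x+z)) ≤ (1-t) * log (Gamma x) + t * log (Gamma (x+m))
  have hgpos : 0 < Real.Gamma (x + z) := Real.Gamma_pos_of_pos (by linarith)
  have hgx : 0 < Real.Gamma x := Real.Gamma_pos_of_pos hx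
  have hgxm : 0 < Real.Gamma (x + m) := Real.Gamma_pos_of_pos (by linarith)
  have hlog2 : Real.log (Real.Gamma (x + m)) ≤ Real.log (Real.Gamma x) + m * Real.log (x + m) := by
    have := Real.log_le_log (by positivity) (gamma_add_nat_le x hx m)
    rwa [Real.log_mul hgx.ne' (by positivity), Real.log_pow] at this
  have key : Real.log (Real.Gamma (x + z)) ≤ Real.log (Real.Gamma x) + z * Real.log (x + m) := by
    have h2 : t * Real.log (Real.Gamma (x+m)) ≤ t * (Real.log (Real.Gamma x) + m * Real.log (x + m)) :=
      mul_le_mul_of_nonneg_left hlog2 ht0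
    have h3 : t * (m:ℝ) = z := by field_simp [ht]; rw [ht, div_mul_cancel₀ _ hm'.ne']
    simp only [smul_eq_mul] at hcvx
    have h5 : t * ((m:ℝ) * Real.log (x + m)) = z * Real.log (x + m) := by
      rw [← h3]; ring
    linarith [hcvx, h2, h5]
  have := Real.exp_le_exp.mpr key
  rwa [Real.exp_log hgpos, Real.exp_add, Real.exp_log hgx, mul_comm z,
    ← Real.rpow_def_of_pos (by positivity : (0:ℝ) < x + m)] at this



lemma hasDerivAt_ofReal_cpow' (c : ℂ) (hc : c ≠ 0) (u : ℝ) (hu : u ≠ 0) :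
    HasDerivAt (fun y : ℝ => (y : ℂ) ^ c) (c * (u : ℂ) ^ (c - 1)) u := by
  have hr : c - 1 ≠ -1 := by
    intro h; apply hc; linear_combination h
  have h := (hasDerivAt_ofReal_cpow_const' hu hr).const_mul c
  rw [sub_add_cancel] at h
  have heq : (fun y : ℝ => c * ((y:ℂ) ^ c / c)) = fun y : ℝ => (y : ℂ) ^ c := by
    funext y; field_simp
  rwa [heq] at h

lemma rpow_bound_uIcc {n t u : ℝ} (p : ℝ) (hn : 0 < n) (ht : 0 < t) (hu : u ∈ Set.uIcc n t) :
    u ^ p ≤ t ^ p + n ^ p := by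
  have hu0 : 0 < u := by
    rcases Set.mem_uIcc.mp hu with ⟨h1, _⟩ | ⟨h1, _⟩ <;> linarith
  rcases le_or_gt 0 p with hp | hp
  · rcases Set.mem_uIcc.mp hu with ⟨_, h2⟩ | ⟨_, h2⟩
    · have := Real.rpow_le_rpow hu0.le h2 hp
      have h3 : (0:ℝ) ≤ n ^ p := Real.rpow_nonneg hn.le p
      linarith
    · have := Real.rpow_le_rpow hu0.le h2 hp
      have h3 : (0:ℝ) ≤ t ^ p := Real.rpow_nonneg ht.le p
      linarith
  · rcases Set.mem_uIcc.mp hu with ⟨h1, _⟩ | ⟨h1, _⟩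
    · have := Real.rpow_le_rpow_of_nonpos hn h1 hp.le
      have h3 : (0:ℝ) ≤ t ^ p := Real.rpow_nonneg ht.le p
      linarith
    · have := Real.rpow_le_rpow_of_nonpos ht h1 hp.le
      have h3 : (0:ℝ) ≤ n ^ p := Real.rpow_nonneg hn.le p
      linarith

lemma taylor_cpow_bound (s : ℂ) {n t : ℝ} (hn : 0 < n) (ht : 0 < t) :
    ‖(t:ℂ) ^ s - (n:ℂ) ^ s - s * (n:ℂ) ^ (s - 1) * ((t:ℂ) - (n:ℂ))‖
      ≤ ‖s‖ * ‖s - 1‖ * (t - n) ^ 2 * (t ^ (s.re - 2) + n ^ (s.re - 2)) := by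
  rcases eq_or_ne s 0 with rfl | hs0
  · simp
  rcases eq_or_ne s 1 with rfl | hs1
  · simp
  have hs1' : s - 1 ≠ 0 := sub_ne_zero.mpr hs1
  set M : ℝ := t ^ (s.re - 2) + n ^ (s.re - 2) with hM
  have hM0 : 0 ≤ M := by
    have := Real.rpow_nonneg ht.le (s.re - 2)
    have := Real.rpow_nonneg hn.le (s.re - 2)
    positivity
  -- membership facts
  have hKsub : Set.uIcc n t ⊆ Set.Ioi (0:ℝ) := by
    intro u hu
    rcases Set.mem_uIcc.mp hu with ⟨h1, _⟩ | ⟨h1, _⟩ <;> simp <;> linarith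
  have hnK : n ∈ Set.uIcc n t := Set.left_mem_uIcc
  have htK : t ∈ Set.uIcc n t := Set.right_mem_uIcc
  -- inner MVT : ‖u^(s-1) - n^(s-1)‖ ≤ ‖s-1‖ * M * |u - n|
  have inner : ∀ u ∈ Set.uIcc n t,
      ‖(u:ℂ) ^ (s-1) - (n:ℂ) ^ (s-1)‖ ≤ (‖s - 1‖ * M) * ‖u - n‖ := by
    intro u huK
    refine (convex_uIcc n t).norm_image_sub_le_of_norm_hasDerivWithin_le
      (f := fun y : ℝ => (y:ℂ) ^ (s-1)) (f' := fun y : ℝ => (s-1) * (y:ℂ) ^ (s-2))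
      (fun v hv => ?_) (fun v hv => ?_) hnK huK
    · have hv0 : (0:ℝ) < v := hKsub hv
      have := hasDerivAt_ofReal_cpow' (s-1) hs1' v hv0.ne'
      rw [show s - 1 - 1 = s - 2 by ring] at this
      exact this.hasDerivWithinAt
    · have hv0 : (0:ℝ) < v := hKsub hv
      rw [norm_mul]
      have h1 : ‖(v:ℂ) ^ (s-2)‖ = v ^ (s.re - 2) := by
        rw [Complex.norm_cpow_eq_rpow_re_of_pos hv0]
        norm_num
      rw [h1]
      exact mul_le_mul_of_nonneg_left (rpow_bound_uIcc _ hn ht hv) (norm_nonneg _)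
  -- outer MVT
  have houter : ∀ u ∈ Set.uIcc n t,
      HasDerivWithinAt (fun y : ℝ => (y:ℂ) ^ s - s * (n:ℂ) ^ (s-1) * (y:ℂ))
        (s * ((u:ℂ) ^ (s-1) - (n:ℂ) ^ (s-1))) (Set.uIcc n t) u := by
    intro u huK
    have hu0 : (0:ℝ) < u := hKsub huK
    have h1 := (hasDerivAt_ofReal_cpow' s hs0 u hu0.ne').hasDerivWithinAt
      (s := Set.uIcc n t)
    have h2 : HasDerivWithinAt (fun y : ℝ => s * (n:ℂ) ^ (s-1) * (y:ℂ))
        (s * (n:ℂ) ^ (s-1)) (Set.uIcc n t) u := by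
      simpa using ((Complex.ofRealCLM.hasDerivAt (x := u)).const_mul
        (s * (n:ℂ) ^ (s-1))).hasDerivWithinAt (s := Set.uIcc n t)
    have := h1.sub h2
    rw [show s * ((u:ℂ) ^ (s-1) - (n:ℂ) ^ (s-1)) = s * (u:ℂ) ^ (s - 1) - s * (n:ℂ) ^ (s - 1) by ring]
    exact this
  have bound : ∀ u ∈ Set.uIcc n t,
      ‖s * ((u:ℂ) ^ (s-1) - (n:ℂ) ^ (s-1))‖ ≤ ‖s‖ * (‖s - 1‖ * M * |t - n|) := by
    intro u huK
    rw [norm_mul]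
    refine mul_le_mul_of_nonneg_left ?_ (norm_nonneg s)
    refine (inner u huK).trans ?_
    have h2 : ‖u - n‖ ≤ |t - n| := by
      rw [Real.norm_eq_abs]
      rcases Set.mem_uIcc.mp huK with ⟨h1, h2⟩ | ⟨h1, h2⟩ <;> rw [abs_le] <;>
        constructor <;> [skip; skip; skip; skip] <;> cases' abs_cases (t - n) with h h <;>
        linarith [h.1, h.2]
    exact mul_le_mul_of_nonneg_left h2 (by positivity)
  have key := (convex_uIcc n t).norm_image_sub_le_of_norm_hasDerivWithin_le
    houter bound hnK htK
  have hre : ((t:ℂ) ^ s - s * (n:ℂ) ^ (s-1) * (t:ℂ)) - ((n:ℂ) ^ s - s * (n:ℂ) ^ (s-1) * (n:ℂ))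
      = (t:ℂ) ^ s - (n:ℂ) ^ s - s * (n:ℂ) ^ (s - 1) * ((t:ℂ) - (n:ℂ)) := by ring
  rw [hre] at key
  refine key.trans ?_
  rw [Real.norm_eq_abs]
  have : ‖s‖ * (‖s - 1‖ * M * |t - n|) * |t - n| = ‖s‖ * ‖s - 1‖ * (|t-n| * |t-n|) * M := by ring
  rw [this, ← abs_mul, ← sq, abs_sq]

lemma integral_bound (s : ℂ) (hσ : 0 < s.re) (n : ℝ) (hn2 : 2 ≤ n) :
    ‖Complex.Gamma (s + n) - (n:ℂ) ^ s * Complex.Gamma (n:ℂ)‖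
      ≤ ‖s‖ * ‖s - 1‖ * (Real.Gamma (n + s.re - 2) * ((s.re - 2) ^ 2 + (n + s.re - 2))
          + n ^ (s.re - 2) * (Real.Gamma n * n)) := by
  set σ := s.re with hσdef
  have hn0 : (0:ℝ) < n := by linarith
  have hnc0 : ((n:ℝ):ℂ) ≠ 0 := Complex.ofReal_ne_zero.mpr hn0.ne'
  set c : ℝ := ‖s‖ * ‖s - 1‖ with hc
  have hc0 : 0 ≤ c := by positivity
  -- complex integrands
  set fA : ℝ → ℂ := fun t => ↑(Real.exp (-t)) * (t:ℂ) ^ (s + n - 1) with hfA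
  set fB : ℝ → ℂ := fun t => (n:ℂ) ^ s * (↑(Real.exp (-t)) * (t:ℂ) ^ ((n:ℂ) - 1)) with hfB
  set fC : ℝ → ℂ := fun t => (s * (n:ℂ) ^ (s-1)) * (↑(Real.exp (-t)) * (t:ℂ) ^ (((n:ℂ) + 1) - 1))
    with hfC
  set fD : ℝ → ℂ := fun t => (s * (n:ℂ) ^ (s-1) * (n:ℂ)) * (↑(Real.exp (-t)) * (t:ℂ) ^ ((n:ℂ) - 1))
    with hfD
  have hres : 0 < (s + (n:ℂ)).re := by
    simp only [Complex.add_re, Complex.ofReal_re]; linarith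
  have hren : 0 < ((n:ℝ):ℂ).re := by simpa using hn0
  have hren1 : 0 < ((n:ℂ) + 1).re := by
    simp only [Complex.add_re, Complex.ofReal_re, Complex.one_re]; linarith
  have hGamma : ∀ c : ℂ, 0 < c.re →
      Complex.Gamma c = ∫ t in Ioi (0:ℝ), ↑(Real.exp (-t)) * (t:ℂ) ^ (c - 1) := by
    intro c hc
    rw [Complex.Gamma_eq_integral hc, Complex.GammaIntegral]
  have hIA : IntegrableOn fA (Ioi 0) := by
    simpa [hfA] using Complex.GammaIntegral_convergent hres
  have hIB : IntegrableOn fB (Ioi 0) := by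
    exact (Complex.GammaIntegral_convergent hren).const_mul _
  have hIC : IntegrableOn fC (Ioi 0) := by
    exact (Complex.GammaIntegral_convergent hren1).const_mul _
  have hID : IntegrableOn fD (Ioi 0) := by
    exact (Complex.GammaIntegral_convergent hren).const_mul _
  have hIAB : IntegrableOn (fun t => fA t - fB t) (Ioi 0) := by exact hIA.sub hIB
  have hIABC : IntegrableOn (fun t => fA t - fB t - fC t) (Ioi 0) := by exact hIAB.sub hIC
  have hsplit : Complex.Gamma (s + n) - (n:ℂ) ^ s * Complex.Gamma (n:ℂ)
      = ∫ t in Ioi (0:ℝ), (fA t - fB t - fC t + fD t) := by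
    rw [MeasureTheory.integral_add hIABC hID,
      MeasureTheory.integral_sub hIAB hIC,
      MeasureTheory.integral_sub hIA hIB]
    simp only [hfB, hfC, hfD, MeasureTheory.integral_const_mul]
    rw [← hGamma _ hres, ← hGamma _ hren, ← hGamma _ hren1]
    rw [Complex.Gamma_add_one _ hnc0]
    ring
  -- real comparison function
  set e : ℝ → ℝ → ℝ := fun μ t => Real.exp (-t) * t ^ (μ - 1) with he
  set H : ℝ → ℝ := fun t => c * ((e (n+σ) t - 2*n * e (n+σ-1) t + n^2 * e (n+σ-2) t)
      + n ^ (σ-2) * (e (n+2) t - 2*n * e (n+1) t + n^2 * e n t)) with hH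
  have hie : ∀ μ : ℝ, 0 < μ → IntegrableOn (e μ) (Ioi 0) := fun μ hμ =>
    Real.GammaIntegral_convergent hμ
  have hμ1 : (0:ℝ) < n + σ := by linarith
  have hμ2 : (0:ℝ) < n + σ - 1 := by linarith
  have hμ3 : (0:ℝ) < n + σ - 2 := by linarith
  have hμ4 : (0:ℝ) < n + 2 := by linarith
  have hμ5 : (0:ℝ) < n + 1 := by linarith
  have hP1 : IntegrableOn (fun t => e (n+σ) t - 2*n * e (n+σ-1) t + n^2 * e (n+σ-2) t)
      (Ioi 0) := by
    exact ((hie _ hμ1).sub ((hie _ hμ2).const_mul (2*n))).add ((hie _ hμ3).const_mul (n^2))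
  have hP2 : IntegrableOn (fun t => e (n+2) t - 2*n * e (n+1) t + n^2 * e n t) (Ioi 0) := by
    exact ((hie _ hμ4).sub ((hie _ hμ5).const_mul (2*n))).add ((hie _ hn0).const_mul (n^2))
  have hIH : IntegrableOn H (Ioi 0) := by
    apply Integrable.const_mul
    exact hP1.add (hP2.const_mul _)
  -- pointwise bound
  have hpt : ∀ t : ℝ, t ∈ Ioi (0:ℝ) → ‖fA t - fB t - fC t + fD t‖ ≤ H t := by
    intro t ht
    rw [Set.mem_Ioi] at ht
    have htc0 : (t:ℂ) ≠ 0 := Complex.ofReal_ne_zero.mpr ht.ne'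
    have hc1 : (t:ℂ) ^ (s + n - 1) = (t:ℂ) ^ ((n:ℂ) - 1) * (t:ℂ) ^ s := by
      rw [← Complex.cpow_add _ _ htc0]; ring_nf
    have hc2 : (t:ℂ) ^ (((n:ℂ) + 1) - 1) = (t:ℂ) ^ ((n:ℂ) - 1) * (t:ℂ) := by
      rw [show ((n:ℂ) + 1 - 1 : ℂ) = ((n:ℂ) - 1) + 1 by ring, Complex.cpow_add _ _ htc0,
        Complex.cpow_one]
    have heq : fA t - fB t - fC t + fD t
        = ↑(Real.exp (-t)) * (t:ℂ) ^ ((n:ℂ) - 1)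
          * ((t:ℂ) ^ s - (n:ℂ) ^ s - s * (n:ℂ) ^ (s - 1) * ((t:ℂ) - (n:ℂ))) := by
      simp only [hfA, hfB, hfC, hfD, hc1, hc2]; ring
    rw [heq]
    rw [norm_mul, norm_mul]
    have h1 : ‖(↑(Real.exp (-t)) : ℂ)‖ = Real.exp (-t) := by
      rw [Complex.norm_real, Real.norm_eq_abs, abs_of_pos (Real.exp_pos _)]
    have h2 : ‖(t:ℂ) ^ ((n:ℂ) - 1)‖ = t ^ (n - 1) := by
      rw [Complex.norm_cpow_eq_rpow_re_of_pos ht]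
      norm_num
    rw [h1, h2]
    have h3 := taylor_cpow_bound s hn0 ht
    have h4 : Real.exp (-t) * t ^ (n-1) * ‖(t:ℂ) ^ s - (n:ℂ) ^ s - s * (n:ℂ) ^ (s - 1) * ((t:ℂ) - (n:ℂ))‖
        ≤ Real.exp (-t) * t ^ (n-1) * (c * (t - n)^2 * (t ^ (σ - 2) + n ^ (σ - 2))) := by
      apply mul_le_mul_of_nonneg_left h3 (by positivity)
    refine h4.trans_eq ?_
    -- rpow expansion equality
    have key : ∀ x y : ℝ, t ^ (x + y) = t ^ x * t ^ y := fun x y => Real.rpow_add ht x y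
    have ht2 : t ^ ((2:ℕ):ℝ) = t ^ (2:ℕ) := Real.rpow_natCast t 2
    have e1 : t ^ (n + σ - 1) = t ^ (n-1) * t ^ (σ-2) * t^2 := by
      rw [show n + σ - 1 = (n-1) + (σ-2) + ((2:ℕ):ℝ) by push_cast; ring, key, key, ht2]
    have e2 : t ^ (n + σ - 1 - 1) = t ^ (n-1) * t ^ (σ-2) * t := by
      rw [show n + σ - 1 - 1 = (n-1) + (σ-2) + 1 by ring, key, key, Real.rpow_one]
    have e3 : t ^ (n + σ - 2 - 1) = t ^ (n-1) * t ^ (σ-2) := by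
      rw [show n + σ - 2 - 1 = (n-1) + (σ-2) by ring, key]
    have e4 : t ^ (n + 2 - 1) = t ^ (n-1) * t^2 := by
      rw [show n + 2 - 1 = (n-1) + ((2:ℕ):ℝ) by push_cast; ring, key, ht2]
    have e5 : t ^ (n + 1 - 1) = t ^ (n-1) * t := by
      rw [show n + 1 - 1 = (n-1) + 1 by ring, key, Real.rpow_one]
    simp only [hH, he]
    rw [e1, e2, e3, e4, e5]
    ring
  have hnorm : ‖Complex.Gamma (s + n) - (n:ℂ) ^ s * Complex.Gamma (n:ℂ)‖
      ≤ ∫ t in Ioi (0:ℝ), H t := by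
    rw [hsplit]
    refine MeasureTheory.norm_integral_le_of_norm_le hIH ?_
    exact (ae_restrict_iff' measurableSet_Ioi).mpr (Filter.Eventually.of_forall hpt)
  refine hnorm.trans_eq ?_
  -- compute the integral
  have hint : ∫ t in Ioi (0:ℝ), H t
      = c * ((Real.Gamma (n+σ) - 2*n * Real.Gamma (n+σ-1) + n^2 * Real.Gamma (n+σ-2))
        + n ^ (σ-2) * (Real.Gamma (n+2) - 2*n * Real.Gamma (n+1) + n^2 * Real.Gamma n)) := by
    have hg : ∀ μ : ℝ, 0 < μ → ∫ t in Ioi (0:ℝ), e μ t = Real.Gamma μ := fun μ hμ =>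
      (Real.Gamma_eq_integral hμ).symm
    simp only [hH]
    have hQ1 : IntegrableOn (fun t => e (n+σ) t - 2*n * e (n+σ-1) t) (Ioi 0) := by
      exact (hie _ hμ1).sub ((hie _ hμ2).const_mul (2*n))
    have hQ2 : IntegrableOn (fun t => e (n+2) t - 2*n * e (n+1) t) (Ioi 0) := by
      exact (hie _ hμ4).sub ((hie _ hμ5).const_mul (2*n))
    rw [MeasureTheory.integral_const_mul]
    rw [MeasureTheory.integral_add hP1 (hP2.const_mul _)]
    rw [MeasureTheory.integral_add hQ1 ((hie _ hμ3).const_mul (n^2))]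
    rw [MeasureTheory.integral_sub (hie _ hμ1) ((hie _ hμ2).const_mul (2*n))]
    rw [MeasureTheory.integral_const_mul, MeasureTheory.integral_const_mul,
      MeasureTheory.integral_const_mul]
    rw [MeasureTheory.integral_add hQ2 ((hie _ hn0).const_mul (n^2))]
    rw [MeasureTheory.integral_sub (hie _ hμ4) ((hie _ hμ5).const_mul (2*n))]
    rw [MeasureTheory.integral_const_mul, MeasureTheory.integral_const_mul]
    rw [hg _ hμ1, hg _ hμ2, hg _ hμ3, hg _ hμ4, hg _ hμ5, hg _ hn0]
  rw [hint]
  -- Gamma recurrences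
  have g1 : Real.Gamma (n+σ) = (n+σ-1) * Real.Gamma (n+σ-1) := by
    have h := Real.Gamma_add_one hμ2.ne'
    rw [show n+σ-1+1 = n+σ by ring] at h; exact h
  have g2 : Real.Gamma (n+σ-1) = (n+σ-2) * Real.Gamma (n+σ-2) := by
    have h := Real.Gamma_add_one hμ3.ne'
    rw [show n+σ-2+1 = n+σ-1 by ring] at h; exact h
  have g3 : Real.Gamma (n+2) = (n+1) * Real.Gamma (n+1) := by
    have h := Real.Gamma_add_one hμ5.ne'
    rw [show n+1+1 = n+2 by ring] at h; exact h
  have g4 : Real.Gamma (n+1) = n * Real.Gamma n := by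
    rw [Real.Gamma_add_one hn0.ne']
  rw [g1, g2, g3, g4]
  ring

set_option maxHeartbeats 1000000 in
/-- Stirling-type asymptotic (Luo–Sarnak (2.3)): uniformly for `a ≤ Re(s) ≤ b`,
`Γ(s + k - 1)/Γ(k - 1) = (k - 1)^s (1 + O_{a,b}((|s| + 1)² k^{-1}))`. -/
theorem stmt10 (a b : ℝ) (ha : 0 < a) (hab : a ≤ b) :
    ∃ C > (0 : ℝ), ∀ k : ℕ, 3 ≤ k → ∀ s : ℂ, a ≤ s.re → s.re ≤ b →
      ‖Complex.Gamma (s + k - 1) / Complex.Gamma ((k : ℂ) - 1) - ((k : ℂ) - 1) ^ s‖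
        ≤ C * (1 + ‖s‖) ^ 2 * (k : ℝ)⁻¹ * ‖((k : ℂ) - 1) ^ s‖ := by
  set m : ℕ := ⌈b⌉₊ with hm
  set c₀ : ℝ := min 1 (a/2) with hc₀def
  have hc₀ : 0 < c₀ := lt_min one_pos (by linarith)
  have hc₀1 : c₀ ≤ 1 := min_le_left _ _
  have hc₀a : c₀ ≤ a/2 := min_le_right _ _
  set w : ℝ := (1 + (m:ℝ)) ^ b with hw
  have hw1 : (1:ℝ) ≤ w := Real.one_le_rpow (by simp) (by linarith)
  set C₂ : ℝ := w * ((b+2)^2 / c₀^2 + 1/c₀) + 1 with hC₂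
  have hC₂pos : 0 < C₂ := by positivity
  have hbm : b ≤ (m:ℝ) := Nat.le_ceil b
  clear_value m c₀ w C₂
  refine ⟨(3/2) * C₂, by positivity, ?_⟩
  intro k hk s hsa hsb
  set σ : ℝ := s.re with hσdef
  have hσ0 : 0 < σ := lt_of_lt_of_le ha hsa
  set n : ℝ := (k:ℝ) - 1 with hn
  have hk3 : (3:ℝ) ≤ (k:ℝ) := by exact_mod_cast hk
  have hn2 : 2 ≤ n := by rw [hn]; linarith
  have hn0 : 0 < n := by linarith
  have hμ3 : 0 < n + σ - 2 := by linarith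
  have hμ2 : 0 < n + σ - 1 := by linarith
  have hμ1 : 0 < n + σ := by linarith
  -- abbreviations
  set Gn : ℝ := Real.Gamma n with hGn
  set G2 : ℝ := Real.Gamma (n + σ - 2) with hG2
  set GA : ℝ := Real.Gamma (n + σ - 1) with hGA
  set X : ℝ := n ^ σ with hX
  set Y : ℝ := n ^ (σ - 2) with hY
  have hGnpos : 0 < Gn := Real.Gamma_pos_of_pos hn0
  have hG2pos : 0 < G2 := Real.Gamma_pos_of_pos hμ3
  have hGApos : 0 < GA := Real.Gamma_pos_of_pos hμ2
  have hXpos : 0 < X := Real.rpow_pos_of_pos hn0 _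
  have hYpos : 0 < Y := Real.rpow_pos_of_pos hn0 _
  -- rewrite the complex expressions
  have hcast : ((k:ℂ) - 1) = ((n:ℝ) : ℂ) := by rw [hn]; push_cast; ring
  have hcast2 : s + (k:ℂ) - 1 = s + ((n:ℝ) : ℂ) := by rw [hn]; push_cast; ring
  have hGammaofReal : Complex.Gamma ((n:ℝ) : ℂ) = (Gn : ℂ) := Complex.Gamma_ofReal n
  have hGnne : (Gn : ℂ) ≠ 0 := Complex.ofReal_ne_zero.mpr hGnpos.ne'
  have hXnorm : ‖((n:ℝ) : ℂ) ^ s‖ = X := by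
    rw [Complex.norm_cpow_eq_rpow_re_of_pos hn0, ← hσdef, ← hX]
  rw [hcast, hcast2, hGammaofReal, hXnorm]
  have hdiv : Complex.Gamma (s + n) / (Gn : ℂ) - ((n:ℝ):ℂ) ^ s
      = (Complex.Gamma (s + n) - ((n:ℝ):ℂ) ^ s * (Gn : ℂ)) / (Gn : ℂ) := by
    field_simp
  rw [hdiv, norm_div, Complex.norm_real, Real.norm_eq_abs, abs_of_pos hGnpos,
    div_le_iff₀ hGnpos]
  have hIB := integral_bound s hσ0 n hn2
  rw [hGammaofReal] at hIB
  refine hIB.trans ?_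
  -- now a purely real estimate
  set c : ℝ := ‖s‖ * ‖s - 1‖ with hc
  show c * (G2 * ((σ - 2) ^ 2 + (n + σ - 2)) + Y * (Gn * n))
      ≤ 3/2 * C₂ * (1 + ‖s‖) ^ 2 * (k:ℝ)⁻¹ * X * Gn
  clear_value σ n Gn G2 GA X Y c
  have hc0 : 0 ≤ c := by rw [hc]; positivity
  have hcle : c ≤ (1 + ‖s‖)^2 := by
    have h1 : ‖s - 1‖ ≤ ‖s‖ + 1 := by
      calc ‖s - 1‖ ≤ ‖s‖ + ‖(1:ℂ)‖ := norm_sub_le s 1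
        _ = ‖s‖ + 1 := by norm_num
    have h2 : (0:ℝ) ≤ ‖s‖ := norm_nonneg s
    rw [hc]
    calc ‖s‖ * ‖s - 1‖ ≤ (1 + ‖s‖) * (1 + ‖s‖) :=
          mul_le_mul (by linarith) (by linarith) (norm_nonneg _) (by linarith)
      _ = (1 + ‖s‖)^2 := by ring
  -- Gamma ratio facts
  have hσm : σ ≤ (m:ℝ) := hsb.trans hbm
  have hP : Real.Gamma (n + σ) ≤ Gn * (w * X) := by
    refine (gamma_add_le n σ m hn0 hσ0.le hσm).trans ?_
    rw [← hGn]
    have s1 : n + (m:ℝ) ≤ (1 + (m:ℝ)) * n := by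
      have h0 : (0:ℝ) ≤ (m:ℝ) := Nat.cast_nonneg m
      linarith [mul_nonneg h0 (show (0:ℝ) ≤ n - 1 by linarith)]
    have s2 : (n + (m:ℝ)) ^ σ ≤ ((1 + (m:ℝ)) * n) ^ σ :=
      Real.rpow_le_rpow (by positivity) s1 hσ0.le
    have s3 : ((1 + (m:ℝ)) * n) ^ σ = (1 + (m:ℝ)) ^ σ * n ^ σ :=
      Real.mul_rpow (by positivity) hn0.le
    have s4 : (1 + (m:ℝ)) ^ σ ≤ w := by
      rw [hw]; exact Real.rpow_le_rpow_of_exponent_le (by simp) hsb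
    have s5 : (n + (m:ℝ)) ^ σ ≤ w * X := by
      rw [hX]
      calc (n + (m:ℝ)) ^ σ ≤ (1 + (m:ℝ)) ^ σ * n ^ σ := by rw [← s3]; exact s2
        _ ≤ w * n ^ σ := mul_le_mul_of_nonneg_right s4 (Real.rpow_nonneg hn0.le σ)
    exact mul_le_mul_of_nonneg_left s5 hGnpos.le
  have hGAeq : (n + σ - 1) * GA = Real.Gamma (n + σ) := by
    have h := Real.Gamma_add_one hμ2.ne'
    rw [show n + σ - 1 + 1 = n + σ by ring] at h
    rw [hGA, h]
  have hG2eq : (n + σ - 2) * G2 = GA := by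
    have h := Real.Gamma_add_one hμ3.ne'
    rw [show n + σ - 2 + 1 = n + σ - 1 by ring] at h
    rw [hG2, hGA, h]
  have hcn : c₀ * n ≤ (a/2) * n := mul_le_mul_of_nonneg_right hc₀a hn0.le
  have hcn1 : c₀ * n ≤ n := by
    have := mul_le_mul_of_nonneg_right hc₀1 hn0.le
    linarith
  have hu1 : c₀ * n ≤ n + σ - 1 := by
    rcases le_or_gt a 2 with h | h
    · linarith [mul_nonneg (show (0:ℝ) ≤ n - 2 by linarith)
        (show (0:ℝ) ≤ 2 - a by linarith)]
    · linarith
  have hu2 : c₀ * n ≤ n + σ - 2 := by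
    rcases le_or_gt a 2 with h | h
    · linarith [mul_nonneg (show (0:ℝ) ≤ n - 2 by linarith)
        (show (0:ℝ) ≤ 2 - a by linarith)]
    · linarith
  have hA' : (c₀ * n) * GA ≤ Gn * (w * X) := by
    calc (c₀ * n) * GA ≤ (n + σ - 1) * GA := mul_le_mul_of_nonneg_right hu1 hGApos.le
      _ = Real.Gamma (n + σ) := hGAeq
      _ ≤ Gn * (w * X) := hP
  have hB : (c₀ * n) * ((c₀ * n) * G2) ≤ Gn * (w * X) := by
    have h1 : (c₀ * n) * G2 ≤ GA := by
      calc (c₀ * n) * G2 ≤ (n + σ - 2) * G2 := mul_le_mul_of_nonneg_right hu2 hG2pos.le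
        _ = GA := hG2eq
    calc (c₀ * n) * ((c₀ * n) * G2) ≤ (c₀ * n) * GA :=
          mul_le_mul_of_nonneg_left h1 (by positivity)
      _ ≤ Gn * (w * X) := hA'
  have hsq : (σ - 2)^2 ≤ (b + 2)^2 := by
    have h1 : σ - 2 ≤ b + 2 := by linarith
    have h2 : -(b + 2) ≤ σ - 2 := by linarith
    exact sq_le_sq' h2 h1
  have hYX : Y * (n * n) = X := by
    rw [hY, hX, show n * n = n ^ ((2:ℕ):ℝ) by rw [Real.rpow_natCast]; ring,
      ← Real.rpow_add hn0]
    norm_num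
  -- core polynomial inequality
  have h1a : n * c₀^2 * G2 ≤ (c₀ * n) * ((c₀ * n) * G2) := by
    linarith [mul_nonneg (mul_nonneg (sq_nonneg c₀)
      (mul_nonneg hn0.le (show (0:ℝ) ≤ n - 1 by linarith))) hG2pos.le]
  have h1 : (σ - 2)^2 * (n * c₀^2 * G2) ≤ (b + 2)^2 * (Gn * (w * X)) :=
    mul_le_mul hsq (h1a.trans hB) (by positivity) (by positivity)
  have h2 : n * c₀^2 * (G2 * (n + σ - 2)) = c₀ * ((c₀ * n) * GA) := by
    linear_combination (c₀^2 * n) * hG2eq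
  have h2' : n * c₀^2 * (G2 * (n + σ - 2)) ≤ c₀ * (Gn * (w * X)) := by
    rw [h2]; exact mul_le_mul_of_nonneg_left hA' hc₀.le
  have h3 : Y * (Gn * n) * (n * c₀^2) = c₀^2 * (Gn * X) := by
    linear_combination (c₀^2 * Gn) * hYX
  have hC₂c : C₂ * c₀^2 = w * (b+2)^2 + w * c₀ + c₀^2 := by
    rw [hC₂]; field_simp
  have hcore : (G2 * ((σ-2)^2 + (n + σ - 2)) + Y * (Gn * n)) * (n * c₀^2)
      ≤ (C₂ * c₀^2) * (X * Gn) := by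
    rw [hC₂c]
    linarith [h1, h2', h3]
  set S : ℝ := G2 * ((σ-2)^2 + (n + σ - 2)) + Y * (Gn * n) with hS
  have hS0 : 0 ≤ S := by
    have h1 : (0:ℝ) ≤ (σ-2)^2 + (n + σ - 2) := by linarith [sq_nonneg (σ-2)]
    have h2 : (0:ℝ) ≤ G2 * ((σ-2)^2 + (n + σ - 2)) := mul_nonneg hG2pos.le h1
    have h3 : (0:ℝ) ≤ Y * (Gn * n) := by positivity
    linarith
  have hSle : S ≤ C₂ * (X * Gn) / n := by
    rw [le_div_iff₀ hn0]
    have hc₀2 : (0:ℝ) < c₀^2 := by positivity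
    have h' : (S * n) * c₀^2 ≤ (C₂ * (X * Gn)) * c₀^2 := by linarith [hcore]
    exact le_of_mul_le_mul_right h' hc₀2
  have hkn : (k:ℝ) = n + 1 := by rw [hn]; ring
  have hkpos : (0:ℝ) < (k:ℝ) := by linarith
  have hdivk : C₂ * (X * Gn) / n ≤ (3/2) * C₂ * (k:ℝ)⁻¹ * (X * Gn) := by
    have step : C₂ * (X * Gn) / n ≤ (3/2) * C₂ * (X * Gn) / (n + 1) := by
      rw [div_le_div_iff₀ hn0 (by linarith)]
      linarith [mul_nonneg (by positivity : (0:ℝ) ≤ C₂ * (X * Gn))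
        (by linarith : (0:ℝ) ≤ n - 2)]
    refine step.trans_eq ?_
    rw [hkn]
    ring
  -- combine
  have hmain : c * S ≤ (1 + ‖s‖)^2 * ((3/2) * C₂ * (k:ℝ)⁻¹ * (X * Gn)) := by
    have step1 : c * S ≤ (1 + ‖s‖)^2 * (C₂ * (X * Gn) / n) :=
      mul_le_mul hcle hSle hS0 (by positivity)
    refine step1.trans ?_
    exact mul_le_mul_of_nonneg_left hdivk (by positivity)
  calc c * (G2 * ((σ-2)^2 + (n + σ - 2)) + Y * (Gn * n)) = c * S := by rw [hS]
    _ ≤ (1 + ‖s‖)^2 * ((3/2) * C₂ * (k:ℝ)⁻¹ * (X * Gn)) := hmain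
    _ = 3/2 * C₂ * (1 + ‖s‖)^2 * (k:ℝ)⁻¹ * X * Gn := by ring
end
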